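/- arXiv:2303.09251 — 5 statements merged into one kernel-verified Lean document; each statement's English description precedes it below -/
import Mathlib

section
/- Let (W,S) be a Coxeter system, τ ∈ W, and s ∈ S a simple reflection with ℓ(sτ) > ℓ(τ). Set t = τ⁻¹sτ. Then for every ω ∈ W, if ℓ(tω) > ℓ(ω) then ℓ(sτω) > ℓ(τω), and if ℓ(tω) < ℓ(ω) then ℓ(sτω) < ℓ(τω). -/
namespace CoxeterLiftAux

open CoxeterSystem List

attribute [local instance] Classical.propDecidable

variable {W : Type*} [Group W]

/-- Move factors across an equality in a group. -/
theorem conj_mul_eq_iff (p q x c : W) : p * x * q = c ↔ x = p⁻¹ * c * q⁻¹ := by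
  constructor
  · intro h; rw [← h]; group
  · intro h; rw [h]; group

variable {B : Type*} {M : CoxeterMatrix B} (cs : CoxeterSystem M W)

/-- The basic involution used in the Tits sign representation. -/
noncomputable def pm (i : B) : Equiv.Perm (W × ZMod 2) :=
  Function.Involutive.toPerm
    (fun x => (cs.simple i * x.1 * cs.simple i, x.2 + if x.1 = cs.simple i then 1 else 0))
    (by
      rintro ⟨w, z⟩
      have hinv : (cs.simple i)⁻¹ = cs.simple i := cs.inv_simple i
      have h2 : (cs.simple i * w * cs.simple i = cs.simple i) ↔ w = cs.simple i := by
        rw [conj_mul_eq_iff, hinv]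
        rw [cs.simple_mul_simple_self, one_mul]
      simp only [Prod.mk.injEq]
      constructor
      · simp only [mul_assoc, cs.simple_mul_simple_cancel_left, cs.simple_mul_simple_self, mul_one]
      · rw [if_congr h2 rfl rfl]
        rcases eq_or_ne w (cs.simple i) with h | h
        · rw [if_pos h, add_assoc]
          have : (1 : ZMod 2) + 1 = 0 := by decide
          rw [this, add_zero]
        · rw [if_neg h, add_zero, add_zero])

@[simp]
theorem pm_apply (i : B) (x : W × ZMod 2) :
    pm cs i x = (cs.simple i * x.1 * cs.simple i,
      x.2 + if x.1 = cs.simple i then 1 else 0) := rfl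

theorem pm_liftable : M.IsLiftable (pm cs) := by
  intro i i'
  set a := cs.simple i with ha
  set b := cs.simple i' with hb
  have ainv : a⁻¹ = a := cs.inv_simple i
  have binv : b⁻¹ = b := cs.inv_simple i'
  have key : ∀ (k : ℕ) (x : W × ZMod 2),
      ((pm cs i * pm cs i') ^ k) x
      = ((a * b) ^ k * x.1 * (b * a) ^ k,
         x.2 + ∑ r ∈ Finset.range (2 * k),
           (if x.1 = (b * a) ^ r * b then (1 : ZMod 2) else 0)) := by
    intro k
    induction k with
    | zero => intro x; simp
    | succ k ih =>
      intro x
      rw [pow_succ, Equiv.Perm.mul_apply]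
      have hx : (pm cs i * pm cs i') x
          = (a * b * x.1 * (b * a),
             x.2 + ((if x.1 = (b * a) ^ 0 * b then (1 : ZMod 2) else 0)
               + (if x.1 = (b * a) ^ 1 * b then (1 : ZMod 2) else 0))) := by
        rw [Equiv.Perm.mul_apply, pm_apply, pm_apply]
        simp only [← ha, ← hb]
        simp only [Prod.mk.injEq]
        constructor
        · simp only [mul_assoc]
        · rw [add_assoc]
          congr 1
          congr 1
          · apply if_congr _ rfl rfl
            rw [pow_zero, one_mul]
          · apply if_congr _ rfl rfl
            rw [conj_mul_eq_iff, binv, pow_one]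
      rw [hx, ih]
      simp only [Prod.mk.injEq]
      constructor
      · rw [pow_succ (a * b) k, pow_succ' (b * a) k]
        simp only [mul_assoc]
      · have hsum : ∑ r ∈ Finset.range (2 * k),
            (if a * b * x.1 * (b * a) = (b * a) ^ r * b then (1 : ZMod 2) else 0)
            = ∑ r ∈ Finset.range (2 * k),
            (if x.1 = (b * a) ^ (r + 2) * b then (1 : ZMod 2) else 0) := by
          apply Finset.sum_congr rfl
          intro r _
          apply if_congr _ rfl rfl
          rw [conj_mul_eq_iff, mul_inv_rev, mul_inv_rev, ainv, binv]
          have : b * a * ((b * a) ^ r * b) * (a * b) = (b * a) ^ (r + 2) * b := by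
            calc b * a * ((b * a) ^ r * b) * (a * b)
                = (b * a) * (b * a) ^ r * (b * a) * b := by simp only [mul_assoc]
              _ = (b * a) ^ (r + 1) * (b * a) * b := by rw [← pow_succ']
              _ = (b * a) ^ (r + 2) * b := by rw [← pow_succ]
          rw [this]
        rw [hsum]
        rw [show 2 * (k + 1) = (2 * k + 1) + 1 by ring]
        rw [Finset.sum_range_succ', Finset.sum_range_succ']
        push_cast
        ring
  have hab : (a * b) ^ M i i' = 1 := cs.simple_mul_simple_pow i i'
  have hba : (b * a) ^ M i i' = 1 := cs.simple_mul_simple_pow' i i'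
  apply Equiv.ext
  intro x
  rw [key (M i i') x, hab, hba]
  have hsum : ∑ r ∈ Finset.range (2 * M i i'),
      (if x.1 = (b * a) ^ r * b then (1 : ZMod 2) else 0) = 0 := by
    rw [two_mul, Finset.sum_range_add]
    have : ∀ r ∈ Finset.range (M i i'),
        (if x.1 = (b * a) ^ (M i i' + r) * b then (1 : ZMod 2) else 0)
        = (if x.1 = (b * a) ^ r * b then (1 : ZMod 2) else 0) := by
      intro r _
      apply if_congr _ rfl rfl
      rw [pow_add, hba, one_mul]
    rw [Finset.sum_congr rfl this]
    exact CharTwo.add_self_eq_zero _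
  rw [hsum, add_zero, one_mul, mul_one]
  rfl

/-- The Tits sign representation as a homomorphism. -/
noncomputable def φ : W →* Equiv.Perm (W × ZMod 2) := cs.lift ⟨pm cs, pm_liftable cs⟩

/-- The sign cocycle. -/
noncomputable def N (u w : W) : ZMod 2 := ((φ cs u) (w, 0)).2

theorem phi_simple (i : B) : φ cs (cs.simple i) = pm cs i :=
  cs.lift_apply_simple (pm_liftable cs) i

theorem phi_apply (u : W) : ∀ x : W × ZMod 2,
    φ cs u x = (u * x.1 * u⁻¹, x.2 + N cs u x.1) := by
  induction u using cs.simple_induction_left with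
  | one =>
    intro x
    have h1 : ∀ y : W × ZMod 2, φ cs 1 y = y := by
      intro y; rw [map_one]; rfl
    have h2 : N cs 1 x.1 = 0 := by
      unfold N; rw [h1]
    rw [h1, h2, add_zero, one_mul, inv_one, mul_one]
  | mul_simple_left u i ih =>
    have key : ∀ y : W × ZMod 2,
        φ cs (cs.simple i * u) y
        = (cs.simple i * u * y.1 * (u⁻¹ * cs.simple i),
           y.2 + (N cs u y.1 + if u * y.1 * u⁻¹ = cs.simple i then 1 else 0)) := by
      intro y
      rw [map_mul, Equiv.Perm.mul_apply, ih y, phi_simple, pm_apply]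
      simp only [Prod.mk.injEq]
      constructor
      · simp only [mul_assoc]
      · rw [add_assoc]
    intro x
    rw [key x]
    have hN : N cs (cs.simple i * u) x.1
        = N cs u x.1 + if u * x.1 * u⁻¹ = cs.simple i then 1 else 0 := by
      unfold N
      rw [key (x.1, 0)]
      exact zero_add _
    rw [hN]
    simp only [Prod.mk.injEq]
    constructor
    · rw [mul_inv_rev, cs.inv_simple]
      try simp only [mul_assoc]
    · trivial

theorem N_one (w : W) : N cs 1 w = 0 := by
  unfold N
  rw [map_one]
  rfl

theorem N_cocycle (u v w : W) : N cs (u * v) w = N cs v w + N cs u (v * w * v⁻¹) := by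
  show ((φ cs (u * v)) (w, 0)).2 = _
  rw [map_mul, Equiv.Perm.mul_apply, phi_apply cs v, phi_apply cs u]
  simp

theorem N_simple (i : B) (w : W) :
    N cs (cs.simple i) w = if w = cs.simple i then 1 else 0 := by
  unfold N
  rw [phi_simple]
  simp

theorem mem_rightInvSeq_of_N_ne_zero (ω : List B) (w : W)
    (h : N cs (cs.wordProd ω) w ≠ 0) : w ∈ cs.rightInvSeq ω := by
  induction ω with
  | nil =>
    exfalso
    apply h
    simpa using N_one cs w
  | cons i ω ih =>
    rw [cs.wordProd_cons, N_cocycle, N_simple] at h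
    by_cases hc : cs.wordProd ω * w * (cs.wordProd ω)⁻¹ = cs.simple i
    · have hw : w = (cs.wordProd ω)⁻¹ * cs.simple i * cs.wordProd ω := by
        rw [conj_mul_eq_iff] at hc
        rw [hc, inv_inv]
      show w ∈ (cs.wordProd ω)⁻¹ * cs.simple i * cs.wordProd ω :: cs.rightInvSeq ω
      rw [hw]
      exact List.mem_cons_self
    · rw [if_neg hc, add_zero] at h
      exact List.mem_cons_of_mem _ (ih h)

theorem length_lt_of_N_eq_one {w t : W} (ht : cs.IsReflection t)
    (h : N cs w t = 1) : cs.length (w * t) < cs.length w := by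
  obtain ⟨ω, hred, rfl⟩ := cs.exists_reduced_word' w
  have hne : N cs (cs.wordProd ω) t ≠ 0 := by rw [h]; decide
  have hmem := mem_rightInvSeq_of_N_ne_zero cs ω t hne
  exact (cs.isRightInversion_of_mem_rightInvSeq hred hmem).2

theorem N_self {t : W} (ht : cs.IsReflection t) : N cs t t = 1 := by
  obtain ⟨u, j, rfl⟩ := ht
  have h0 : N cs u (cs.simple j) + N cs u⁻¹ (u * cs.simple j * u⁻¹) = 0 := by
    have h := N_cocycle cs u⁻¹ u (cs.simple j)
    rw [inv_mul_cancel, N_one] at h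
    exact h.symm
  have e2 : (cs.simple j * u⁻¹) * (u * cs.simple j * u⁻¹) * (cs.simple j * u⁻¹)⁻¹
      = cs.simple j := by
    rw [mul_inv_rev, inv_inv, cs.inv_simple]
    simp only [mul_assoc, inv_mul_cancel_left, cs.simple_mul_simple_cancel_left]
  have e4 : u⁻¹ * (u * cs.simple j * u⁻¹) * (u⁻¹)⁻¹ = cs.simple j := by
    group
  have e5 : N cs (cs.simple j) (cs.simple j) = 1 := by
    rw [N_simple, if_pos rfl]
  calc N cs (u * cs.simple j * u⁻¹) (u * cs.simple j * u⁻¹)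
      = N cs (u * (cs.simple j * u⁻¹)) (u * cs.simple j * u⁻¹) := by rw [mul_assoc]
    _ = N cs (cs.simple j * u⁻¹) (u * cs.simple j * u⁻¹) + N cs u (cs.simple j) := by
        rw [N_cocycle, e2]
    _ = (N cs u⁻¹ (u * cs.simple j * u⁻¹)
          + N cs (cs.simple j) (u⁻¹ * (u * cs.simple j * u⁻¹) * (u⁻¹)⁻¹))
          + N cs u (cs.simple j) := by
        rw [N_cocycle cs (cs.simple j) u⁻¹]
    _ = 1 := by
        rw [e4, e5]
        linear_combination h0

theorem N_eq_one_iff {w t : W} (ht : cs.IsReflection t) :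
    N cs w t = 1 ↔ cs.length (w * t) < cs.length w := by
  constructor
  · exact length_lt_of_N_eq_one cs ht
  · intro hlt
    by_contra hne
    have h0 : N cs w t = 0 := by
      have h2 : ∀ x : ZMod 2, x = 0 ∨ x = 1 := by decide
      rcases h2 (N cs w t) with h | h
      · exact h
      · exact absurd h hne
    have hc : N cs ((w * t) * t) t = N cs t t + N cs (w * t) (t * t * t⁻¹) :=
      N_cocycle cs (w * t) t t
    have e : t * t * t⁻¹ = t := by rw [ht.mul_self, one_mul, ht.inv]
    have hw : (w * t) * t = w := by rw [mul_assoc, ht.mul_self, mul_one]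
    rw [e, N_self cs ht, hw, h0] at hc
    have h1 : N cs (w * t) t = 1 := by
      have h3 : ∀ x : ZMod 2, (0 : ZMod 2) = 1 + x → x = 1 := by decide
      exact h3 _ hc
    have h4 := length_lt_of_N_eq_one cs ht h1
    rw [hw] at h4
    omega

/-- Key equivalence: for a reflection `r`, `ℓ(r x) < ℓ(x)` iff `N x⁻¹ r = 1`. -/
theorem length_mul_lt_iff {r : W} (hr : cs.IsReflection r) (x : W) :
    cs.length (r * x) < cs.length x ↔ N cs x⁻¹ r = 1 := by
  have h1 : cs.length (x⁻¹ * r) = cs.length (r * x) := by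
    rw [← cs.length_inv (x⁻¹ * r), mul_inv_rev, inv_inv, hr.inv]
  rw [N_eq_one_iff cs hr, h1, cs.length_inv x]

end CoxeterLiftAux

/-- lifting property: for `s` simple with `ℓ(sτ) > ℓ(τ)` and `t = τ⁻¹sτ`,
if `ℓ(tω) > ℓ(ω)` then `ℓ(sτω) > ℓ(τω)`, and if `ℓ(tω) < ℓ(ω)` then `ℓ(sτω) < ℓ(τω)`. -/
theorem stmt_1 {B W : Type*} [Group W] {M : CoxeterMatrix B}
    (cs : CoxeterSystem M W) (τ : W) (i : B)
    (hs : cs.length τ < cs.length (cs.simple i * τ)) :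
    ∀ ω : W,
      (cs.length ω < cs.length (τ⁻¹ * cs.simple i * τ * ω) →
        cs.length (τ * ω) < cs.length (cs.simple i * τ * ω)) ∧
      (cs.length (τ⁻¹ * cs.simple i * τ * ω) < cs.length ω →
        cs.length (cs.simple i * τ * ω) < cs.length (τ * ω)) := by
  intro ω
  have hrs : cs.IsReflection (cs.simple i) := cs.isReflection_simple i
  have ht : cs.IsReflection (τ⁻¹ * cs.simple i * τ) := ⟨τ⁻¹, i, by rw [inv_inv]⟩
  have h2cases : ∀ x : ZMod 2, x = 0 ∨ x = 1 := by decide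
  -- N τ⁻¹ s = 0
  have hτ0 : CoxeterLiftAux.N cs τ⁻¹ (cs.simple i) = 0 := by
    rcases h2cases (CoxeterLiftAux.N cs τ⁻¹ (cs.simple i)) with h | h
    · exact h
    · exfalso
      have := (CoxeterLiftAux.length_mul_lt_iff cs hrs τ).mpr h
      omega
  -- cocycle computation
  have hkey : CoxeterLiftAux.N cs (τ * ω)⁻¹ (cs.simple i)
      = CoxeterLiftAux.N cs ω⁻¹ (τ⁻¹ * cs.simple i * τ) := by
    rw [mul_inv_rev, CoxeterLiftAux.N_cocycle cs ω⁻¹ τ⁻¹ (cs.simple i), hτ0, zero_add,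
      inv_inv]
  have Eτω := CoxeterLiftAux.length_mul_lt_iff cs hrs (τ * ω)
  have Eω := CoxeterLiftAux.length_mul_lt_iff cs ht ω
  have hassoc : cs.simple i * (τ * ω) = cs.simple i * τ * ω := by rw [mul_assoc]
  have hne : cs.length (cs.simple i * (τ * ω)) ≠ cs.length (τ * ω) :=
    hrs.length_mul_right_ne (τ * ω)
  rw [hassoc] at Eτω hne
  constructor
  · intro h
    have h1 : CoxeterLiftAux.N cs ω⁻¹ (τ⁻¹ * cs.simple i * τ) = 0 := by
      rcases h2cases (CoxeterLiftAux.N cs ω⁻¹ (τ⁻¹ * cs.simple i * τ)) with h' | h'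
      · exact h'
      · exfalso
        have := Eω.mpr h'
        omega
    have h2 : ¬ cs.length (cs.simple i * τ * ω) < cs.length (τ * ω) := by
      intro hlt
      have := Eτω.mp hlt
      rw [hkey, h1] at this
      exact absurd this (by decide)
    omega
  · intro h
    have h1 : CoxeterLiftAux.N cs ω⁻¹ (τ⁻¹ * cs.simple i * τ) = 1 := Eω.mp h
    exact Eτω.mpr (by rw [hkey, h1])
end

section
/- Let σ ∈ S_n and let A = {i₁ < … < i_k} ⊆ {1,…,n−1}. Write t_i = (i,n). Then the following are equivalent: (1) σ < t_{i₁}σ < t_{i₂}t_{i₁}σ < … < t_{i_k}⋯t_{i₁}σ in the Bruhat order; (2) σ⁻¹(i_k) < σ⁻¹(i_{k−1}) < … < σ⁻¹(i₁) < σ⁻¹(n). -/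
/-- The number of inversions of a permutation. -/
def permLen {n : ℕ} (σ : Equiv.Perm (Fin n)) : ℕ :=
  (Finset.univ.filter (fun p : Fin n × Fin n => p.1 < p.2 ∧ σ p.2 < σ p.1)).card

/-- The Bruhat order on the symmetric group. -/
def permBruhatLE {n : ℕ} (u v : Equiv.Perm (Fin n)) : Prop :=
  Relation.ReflTransGen
    (fun x y => (∃ a b : Fin n, a ≠ b ∧ y = Equiv.swap a b * x) ∧
      permLen x < permLen y) u v

/-- The strict Bruhat order. -/
def permBruhatLT {n : ℕ} (u v : Equiv.Perm (Fin n)) : Prop :=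
  permBruhatLE u v ∧ u ≠ v

/-- The partial product `t_{i_m}⋯t_{i_1}·σ`, where `t_i = (i, n)`. -/
def chainProd {n k : ℕ} (σ : Equiv.Perm (Fin (n + 1))) (i : Fin k → Fin (n + 1))
    (m : ℕ) : Equiv.Perm (Fin (n + 1)) :=
  (((List.ofFn fun j => Equiv.swap (i j) (Fin.last n)).take m).reverse).prod * σ

lemma permLen_lt_swap_mul {N : ℕ} (π : Equiv.Perm (Fin N)) {a b : Fin N} (hab : a < b)
    (h : π⁻¹ a < π⁻¹ b) : permLen π < permLen (Equiv.swap a b * π) := by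
  classical
  set u := π⁻¹ a with hu
  set v := π⁻¹ b with hv
  have hπu : π u = a := Equiv.apply_symm_apply π a
  have hπv : π v = b := Equiv.apply_symm_apply π b
  have huv : u < v := h
  have hval : ∀ x : Fin N, x ≠ u → x ≠ v → (π x ≠ a ∧ π x ≠ b) := by
    intro x hxu hxv
    refine ⟨fun hh => hxu ?_, fun hh => hxv ?_⟩
    · rw [hu, ← hh]; simp
    · rw [hv, ← hh]; simp
  have hπ'u : (Equiv.swap a b * π) u = b := by
    rw [Equiv.Perm.mul_apply, hπu, Equiv.swap_apply_left]
  have hπ'v : (Equiv.swap a b * π) v = a := by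
    rw [Equiv.Perm.mul_apply, hπv, Equiv.swap_apply_right]
  have hπ'o : ∀ x, x ≠ u → x ≠ v → (Equiv.swap a b * π) x = π x := by
    intro x hxu hxv
    obtain ⟨h1, h2⟩ := hval x hxu hxv
    rw [Equiv.Perm.mul_apply, Equiv.swap_apply_of_ne_of_ne h1 h2]
  set s := (Finset.univ.filter (fun p : Fin N × Fin N => p.1 < p.2 ∧ π p.2 < π p.1)) with hs
  set t := (Finset.univ.filter (fun p : Fin N × Fin N =>
    p.1 < p.2 ∧ (Equiv.swap a b * π) p.2 < (Equiv.swap a b * π) p.1)) with ht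
  set f : Fin N × Fin N → Fin N × Fin N := fun p =>
    if p.2 = u ∧ π p.1 < b then (p.1, v) else if p.1 = v ∧ a < π p.2 then (u, p.2) else p with hf
  have hmem_s : ∀ p : Fin N × Fin N, p ∈ s ↔ p.1 < p.2 ∧ π p.2 < π p.1 := by
    intro p; simp [hs]
  have hmem_t : ∀ p : Fin N × Fin N, p ∈ t ↔
      p.1 < p.2 ∧ (Equiv.swap a b * π) p.2 < (Equiv.swap a b * π) p.1 := by
    intro p; rw [ht, Finset.mem_filter]; simp
  -- structure of images
  have himg : ∀ p ∈ s,
      (p.2 = u ∧ π p.1 < b ∧ f p = (p.1, v) ∧ p.1 < u) ∨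
      (p.1 = v ∧ a < π p.2 ∧ f p = (u, p.2) ∧ v < p.2) ∨
      (¬(p.2 = u ∧ π p.1 < b) ∧ ¬(p.1 = v ∧ a < π p.2) ∧ f p = p) := by
    rintro p hp
    rw [hmem_s] at hp
    obtain ⟨hp12, hpinv⟩ := hp
    by_cases c1 : p.2 = u ∧ π p.1 < b
    · left
      refine ⟨c1.1, c1.2, ?_, ?_⟩
      · simp only [hf, if_pos c1]
      · rw [← c1.1]; exact hp12
    by_cases c2 : p.1 = v ∧ a < π p.2
    · right; left
      refine ⟨c2.1, c2.2, ?_, ?_⟩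
      · simp only [hf, if_neg c1, if_pos c2]
      · rw [← c2.1]; exact hp12
    · right; right
      exact ⟨c1, c2, by simp only [hf, if_neg c1, if_neg c2]⟩
  -- maps to
  have hmaps : ∀ p ∈ s, f p ∈ t := by
    intro p hp
    have hps := (hmem_s p).1 hp
    obtain ⟨hp12, hpinv⟩ := hps
    rcases himg p hp with ⟨hc1, hc2, hfp, hp1u⟩ | ⟨hc1, hc2, hfp, hp2v⟩ | ⟨hnc1, hnc2, hfp⟩
    · rw [hfp, hmem_t]
      have hp1v : p.1 ≠ v := ne_of_lt (lt_trans hp1u huv)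
      have hp1u' : p.1 ≠ u := ne_of_lt hp1u
      refine ⟨lt_trans hp1u huv, ?_⟩
      rw [hπ'v, hπ'o p.1 hp1u' hp1v]
      calc a = π u := hπu.symm
        _ = π p.2 := by rw [hc1]
        _ < π p.1 := hpinv
    · rw [hfp, hmem_t]
      have hp2u : p.2 ≠ u := ne_of_gt (lt_trans huv hp2v)
      have hp2v' : p.2 ≠ v := ne_of_gt hp2v
      refine ⟨lt_trans huv hp2v, ?_⟩
      rw [hπ'u, hπ'o p.2 hp2u hp2v']
      calc π p.2 < π p.1 := hpinv
        _ = π v := by rw [hc1]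
        _ = b := hπv
    · rw [hfp, hmem_t]
      refine ⟨hp12, ?_⟩
      rcases eq_or_ne p.1 u with h1u | h1u
      · have h2u : p.2 ≠ u := by rw [← h1u]; exact ne_of_gt hp12
        have h2v : p.2 ≠ v := by
          intro hh
          rw [hh, hπv, h1u, hπu] at hpinv
          exact absurd hpinv (not_lt.2 (le_of_lt hab))
        rw [h1u, hπ'u, hπ'o p.2 h2u h2v]
        have hlt : π p.2 < a := by rw [h1u, hπu] at hpinv; exact hpinv
        exact lt_trans hlt hab
      rcases eq_or_ne p.1 v with h1v | h1v
      · have h2v : p.2 ≠ v := by rw [← h1v]; exact ne_of_gt hp12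
        have h2u : p.2 ≠ u := ne_of_gt (lt_trans huv (h1v ▸ hp12))
        have hle : ¬ a < π p.2 := fun hh => hnc2 ⟨h1v, hh⟩
        have hne : π p.2 ≠ a := (hval p.2 h2u h2v).1
        rw [h1v, hπ'v, hπ'o p.2 h2u h2v]
        exact lt_of_le_of_ne (not_lt.1 hle) hne
      rcases eq_or_ne p.2 u with h2u | h2u
      · have hge : ¬ π p.1 < b := fun hh => hnc1 ⟨h2u, hh⟩
        have hne : π p.1 ≠ b := (hval p.1 h1u h1v).2
        rw [h2u, hπ'u, hπ'o p.1 h1u h1v]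
        exact lt_of_le_of_ne (not_lt.1 hge) (Ne.symm hne)
      rcases eq_or_ne p.2 v with h2v | h2v
      · rw [h2v, hπ'v, hπ'o p.1 h1u h1v]
        have hlt : b < π p.1 := by rw [h2v, hπv] at hpinv; exact hpinv
        exact lt_trans hab hlt
      · rw [hπ'o p.1 h1u h1v, hπ'o p.2 h2u h2v]
        exact hpinv
  -- injectivity on s
  have hinj : Set.InjOn f s := by
    intro p hp q hq hfeq
    have hps := (hmem_s p).1 hp
    have hqs := (hmem_s q).1 hq
    rcases himg p hp with ⟨hA1, hA2, hfp, hAlt⟩ | ⟨hB1, hB2, hfp, hBlt⟩ | ⟨hn1, hn2, hfp⟩ <;>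
      rcases himg q hq with ⟨hA1', hA2', hfq, hAlt'⟩ | ⟨hB1', hB2', hfq, hBlt'⟩ | ⟨hn1', hn2', hfq⟩
    · -- A A
      rw [hfp, hfq] at hfeq
      have h1 : p.1 = q.1 := (Prod.ext_iff.1 hfeq).1
      exact Prod.ext_iff.2 ⟨h1, by rw [hA1, hA1']⟩
    · -- A B
      rw [hfp, hfq] at hfeq
      have h1 : p.1 = u := (Prod.ext_iff.1 hfeq).1
      exact absurd h1 (ne_of_lt hAlt)
    · -- A C
      rw [hfp, hfq] at hfeq
      have h1 : q.1 = p.1 := ((Prod.ext_iff.1 hfeq).1).symm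
      have h2 : q.2 = v := ((Prod.ext_iff.1 hfeq).2).symm
      exfalso
      have : π q.2 < π q.1 := hqs.2
      rw [h2, hπv, h1] at this
      exact absurd (lt_trans this hA2) (lt_irrefl b)
    · -- B A
      rw [hfp, hfq] at hfeq
      have h1 : u = q.1 := (Prod.ext_iff.1 hfeq).1
      exact absurd h1.symm (ne_of_lt hAlt')
    · -- B B
      rw [hfp, hfq] at hfeq
      have h2 : p.2 = q.2 := (Prod.ext_iff.1 hfeq).2
      exact Prod.ext_iff.2 ⟨by rw [hB1, hB1'], h2⟩
    · -- B C
      rw [hfp, hfq] at hfeq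
      have h1 : q.1 = u := ((Prod.ext_iff.1 hfeq).1).symm
      have h2 : q.2 = p.2 := ((Prod.ext_iff.1 hfeq).2).symm
      exfalso
      have : π q.2 < π q.1 := hqs.2
      rw [h1, hπu, h2] at this
      exact absurd (lt_trans hB2 this) (lt_irrefl a)
    · -- C A
      rw [hfp, hfq] at hfeq
      have h1 : p.1 = q.1 := (Prod.ext_iff.1 hfeq).1
      have h2 : p.2 = v := (Prod.ext_iff.1 hfeq).2
      exfalso
      have : π p.2 < π p.1 := hps.2
      rw [h2, hπv, h1] at this
      exact absurd (lt_trans this hA2') (lt_irrefl b)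
    · -- C B
      rw [hfp, hfq] at hfeq
      have h1 : p.1 = u := (Prod.ext_iff.1 hfeq).1
      have h2 : p.2 = q.2 := (Prod.ext_iff.1 hfeq).2
      exfalso
      have : π p.2 < π p.1 := hps.2
      rw [h1, hπu, h2] at this
      exact absurd (lt_trans hB2' this) (lt_irrefl a)
    · -- C C
      rw [hfp, hfq] at hfeq
      exact hfeq
  have huvt : (u, v) ∈ t := by
    rw [hmem_t]
    exact ⟨huv, by rw [hπ'u, hπ'v]; exact hab⟩
  have huvnot : (u, v) ∉ s.image f := by
    intro hmem
    obtain ⟨p, hp, hfp⟩ := Finset.mem_image.1 hmem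
    rcases himg p hp with ⟨hA1, hA2, hfp', hAlt⟩ | ⟨hB1, hB2, hfp', hBlt⟩ | ⟨hn1, hn2, hfp'⟩
    · rw [hfp'] at hfp
      exact absurd ((Prod.ext_iff.1 hfp).1) (ne_of_lt hAlt)
    · rw [hfp'] at hfp
      exact absurd ((Prod.ext_iff.1 hfp).2) (ne_of_gt hBlt)
    · rw [hfp'] at hfp
      have hps := (hmem_s p).1 hp
      rw [hfp] at hps
      have : π v < π u := hps.2
      rw [hπu, hπv] at this
      exact absurd (lt_trans hab this) (lt_irrefl a)
  have hsub : s.image f ⊆ t := by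
    intro z hz
    obtain ⟨p, hp, hfp⟩ := Finset.mem_image.1 hz
    exact hfp ▸ hmaps p hp
  have hss : s.image f ⊂ t := ⟨hsub, fun hc => huvnot (hc huvt)⟩
  have hcard : (s.image f).card = s.card := Finset.card_image_of_injOn hinj
  have : s.card < t.card := hcard ▸ Finset.card_lt_card hss
  exact this
lemma permLen_swap_mul_iff {N : ℕ} (π : Equiv.Perm (Fin N)) {a b : Fin N} (hab : a < b) :
    permLen π < permLen (Equiv.swap a b * π) ↔ π⁻¹ a < π⁻¹ b := by
  constructor
  · intro hl
    by_contra hcon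
    push_neg at hcon
    have hne : π⁻¹ b ≠ π⁻¹ a := fun hh => (ne_of_lt hab) (by
      have := congrArg π hh; simpa using this.symm)
    have h2 : π⁻¹ b < π⁻¹ a := lt_of_le_of_ne hcon hne
    have hinv1 : (Equiv.swap a b * π)⁻¹ a = π⁻¹ b := by
      rw [mul_inv_rev, Equiv.Perm.mul_apply]
      congr 1
      rw [Equiv.swap_inv, Equiv.swap_apply_left]
    have hinv2 : (Equiv.swap a b * π)⁻¹ b = π⁻¹ a := by
      rw [mul_inv_rev, Equiv.Perm.mul_apply]
      congr 1
      rw [Equiv.swap_inv, Equiv.swap_apply_right]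
    have := permLen_lt_swap_mul (Equiv.swap a b * π) hab (by rw [hinv1, hinv2]; exact h2)
    rw [← mul_assoc, Equiv.swap_mul_self, one_mul] at this
    omega
  · exact permLen_lt_swap_mul π hab
lemma permLen_le_of_bruhatLE {N : ℕ} {u v : Equiv.Perm (Fin N)} (h : permBruhatLE u v) :
    permLen u ≤ permLen v := by
  induction h with
  | refl => exact le_refl _
  | tail _ h2 ih => exact ih.trans (le_of_lt h2.2)
lemma permLen_lt_of_bruhatLT {N : ℕ} {u v : Equiv.Perm (Fin N)} (h : permBruhatLT u v) :
    permLen u < permLen v := by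
  obtain ⟨hle, hne⟩ := h
  rcases Relation.ReflTransGen.cases_head hle with rfl | ⟨c, hc, hcv⟩
  · exact absurd rfl hne
  · exact lt_of_lt_of_le hc.2 (permLen_le_of_bruhatLE hcv)
lemma permBruhatLT_swap_iff {N : ℕ} (π : Equiv.Perm (Fin N)) {a b : Fin N} (hab : a ≠ b) :
    permBruhatLT π (Equiv.swap a b * π) ↔ permLen π < permLen (Equiv.swap a b * π) := by
  constructor
  · exact permLen_lt_of_bruhatLT
  · intro h
    refine ⟨Relation.ReflTransGen.single ⟨⟨a, b, hab, rfl⟩, h⟩, ?_⟩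
    intro hh
    rw [← hh] at h
    exact lt_irrefl _ h
lemma chainProd_zero {n k : ℕ} (σ : Equiv.Perm (Fin (n + 1))) (i : Fin k → Fin (n + 1)) :
    chainProd σ i 0 = σ := by
  simp [chainProd]
lemma chainProd_succ {n k : ℕ} (σ : Equiv.Perm (Fin (n + 1))) (i : Fin k → Fin (n + 1))
    (m : ℕ) (hm : m < k) :
    chainProd σ i (m + 1) = Equiv.swap (i ⟨m, hm⟩) (Fin.last n) * chainProd σ i m := by
  unfold chainProd
  have hlen : m < (List.ofFn fun j => Equiv.swap (i j) (Fin.last n)).length := by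
    simpa using hm
  rw [List.take_succ, List.getElem?_eq_getElem hlen]
  simp [List.getElem_ofFn, mul_assoc]
lemma chainProd_inv_i {n k : ℕ} (σ : Equiv.Perm (Fin (n + 1))) (i : Fin k → Fin (n + 1))
    (hmono : StrictMono i) (hlt : ∀ j, i j < Fin.last n) :
    ∀ (m : ℕ) (j : Fin k), m ≤ (j : ℕ) → (chainProd σ i m)⁻¹ (i j) = σ⁻¹ (i j) := by
  intro m
  induction m with
  | zero => intro j _; rw [chainProd_zero]
  | succ m ih =>
    intro j hj
    have hmk : m < k := lt_of_lt_of_le (Nat.lt_succ_of_le (Nat.le_of_succ_le hj)) j.isLt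
    rw [chainProd_succ σ i m hmk, mul_inv_rev, Equiv.Perm.mul_apply]
    have hne1 : i j ≠ i ⟨m, hmk⟩ := by
      intro hh
      have := hmono.injective hh
      have : (j : ℕ) = m := congrArg Fin.val this
      omega
    have hne2 : i j ≠ Fin.last n := ne_of_lt (hlt j)
    rw [Equiv.swap_inv, Equiv.swap_apply_of_ne_of_ne hne1 hne2]
    exact ih j (Nat.le_of_succ_le hj)
lemma chainProd_inv_last {n k : ℕ} (σ : Equiv.Perm (Fin (n + 1))) (i : Fin k → Fin (n + 1))
    (hmono : StrictMono i) (hlt : ∀ j, i j < Fin.last n) (m : ℕ) (hm : m < k) :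
    (chainProd σ i (m + 1))⁻¹ (Fin.last n) = σ⁻¹ (i ⟨m, hm⟩) := by
  rw [chainProd_succ σ i m hm, mul_inv_rev, Equiv.Perm.mul_apply]
  rw [Equiv.swap_inv, Equiv.swap_apply_right]
  exact chainProd_inv_i σ i hmono hlt m ⟨m, hm⟩ (le_refl m)

/-- for `A = {i₁ < … < i_k} ⊆ {1,…,n−1}`, the chain condition
`σ < t_{i₁}σ < t_{i₂}t_{i₁}σ < …` holds iff
`σ⁻¹(i_k) < … < σ⁻¹(i₁) < σ⁻¹(n)`. -/
theorem stmt_10 {n k : ℕ} (σ : Equiv.Perm (Fin (n + 1)))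
    (i : Fin k → Fin (n + 1)) (hmono : StrictMono i)
    (hlt : ∀ j, i j < Fin.last n) :
    (∀ m : Fin k, permBruhatLT (chainProd σ i m) (chainProd σ i (m + 1))) ↔
      ((∀ a b : Fin k, a < b → σ⁻¹ (i b) < σ⁻¹ (i a)) ∧
        ∀ a : Fin k, σ⁻¹ (i a) < σ⁻¹ (Fin.last n)) := by
  have hstep : ∀ m : Fin k,
      permBruhatLT (chainProd σ i m) (chainProd σ i ((m : ℕ) + 1)) ↔
        σ⁻¹ (i m) < (chainProd σ i (m : ℕ))⁻¹ (Fin.last n) := by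
    intro m
    have hmk : (m : ℕ) < k := m.isLt
    rw [chainProd_succ σ i m hmk, Fin.eta,
      permBruhatLT_swap_iff _ (ne_of_lt (hlt m)),
      permLen_swap_mul_iff _ (hlt m),
      chainProd_inv_i σ i hmono hlt m m (le_refl _)]
  constructor
  · intro H
    have consec : ∀ (mm : ℕ) (h1 : mm + 1 < k),
        σ⁻¹ (i ⟨mm + 1, h1⟩) < σ⁻¹ (i ⟨mm, Nat.lt_of_succ_lt h1⟩) := by
      intro mm h1
      have := (hstep ⟨mm + 1, h1⟩).1 (H ⟨mm + 1, h1⟩)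
      rwa [show ((⟨mm + 1, h1⟩ : Fin k) : ℕ) = mm + 1 from rfl,
        chainProd_inv_last σ i hmono hlt mm (Nat.lt_of_succ_lt h1)] at this
    have zero : ∀ h0 : 0 < k, σ⁻¹ (i ⟨0, h0⟩) < σ⁻¹ (Fin.last n) := by
      intro h0
      have := (hstep ⟨0, h0⟩).1 (H ⟨0, h0⟩)
      rwa [show ((⟨0, h0⟩ : Fin k) : ℕ) = 0 from rfl, chainProd_zero] at this
    have anti : ∀ (d x : ℕ) (hx : x + d + 1 < k),
        σ⁻¹ (i ⟨x + d + 1, hx⟩) < σ⁻¹ (i ⟨x, by omega⟩) := by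
      intro d
      induction d with
      | zero => intro x hx; exact consec x hx
      | succ d ih =>
        intro x hx
        have h1 : x + d + 1 < k := by omega
        exact lt_trans (consec (x + d + 1) hx) (ih x h1)
    have anti' : ∀ (x y : ℕ) (hx : x < k) (hy : y < k), x < y →
        σ⁻¹ (i ⟨y, hy⟩) < σ⁻¹ (i ⟨x, hx⟩) := by
      intro x y hx hy hxy
      have e : (⟨y, hy⟩ : Fin k) = ⟨x + (y - x - 1) + 1, by omega⟩ := by
        apply Fin.ext; simp; omega
      rw [e]
      exact anti (y - x - 1) x (by omega)
    constructor
    · intro a b hab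
      have := anti' a b a.isLt b.isLt hab
      simpa [Fin.eta] using this
    · intro a
      rcases Nat.eq_zero_or_pos (a : ℕ) with h0 | h0
      · have ea : a = ⟨0, h0 ▸ a.isLt⟩ := by
          apply Fin.ext; simpa using h0
        rw [ea]
        exact zero _
      · have h1 : σ⁻¹ (i a) < σ⁻¹ (i ⟨0, lt_trans h0 a.isLt⟩) := by
          have := anti' 0 a (lt_trans h0 a.isLt) a.isLt h0
          simpa [Fin.eta] using this
        exact lt_trans h1 (zero (lt_trans h0 a.isLt))
  · rintro ⟨H1, H2⟩ m
    apply (hstep m).2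
    rcases Nat.eq_zero_or_pos (m : ℕ) with h0 | h0
    · rw [h0, chainProd_zero]
      exact H2 m
    · obtain ⟨mm, hmm⟩ : ∃ mm, (m : ℕ) = mm + 1 := ⟨(m : ℕ) - 1, by omega⟩
      have hmk : mm < k := by omega
      rw [hmm, chainProd_inv_last σ i hmono hlt mm hmk]
      exact H1 ⟨mm, hmk⟩ m (by simp [Fin.lt_def]; omega)
end

section
/- With notation as above (σ ∈ S_n, 𝒟(σ), 𝒫(σ), A^σ, B_σ), for every A in the image of B ↦ B_σ, the fiber {B ∈ 𝒫(σ) : B_σ = A} equals {B ∈ 𝒫(σ) : A ⊆ B ⊆ A^σ}. -/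
open scoped Classical

/-- `𝒟(σ) = {i < n : σ⁻¹(i) < σ⁻¹(n)}`. -/
noncomputable def permD {n : ℕ} (σ : Equiv.Perm (Fin (n + 1))) : Finset (Fin (n + 1)) :=
  Finset.univ.filter (fun i => i < Fin.last n ∧ σ⁻¹ i < σ⁻¹ (Fin.last n))

/-- `A^σ = {j < n : ∃ i ∈ A, i ≤ j, σ⁻¹(i) ≤ σ⁻¹(j) ≤ σ⁻¹(n)}`. -/
noncomputable def upSet {n : ℕ} (σ : Equiv.Perm (Fin (n + 1)))
    (A : Finset (Fin (n + 1))) : Finset (Fin (n + 1)) :=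
  Finset.univ.filter (fun j => j < Fin.last n ∧
    ∃ i ∈ A, i ≤ j ∧ σ⁻¹ i ≤ σ⁻¹ j ∧ σ⁻¹ j ≤ σ⁻¹ (Fin.last n))

/-- `B_σ`, the output of the greedy algorithm on `B`: `i₁` is minimal in `B`, and
inductively `i_{m+1}` is the minimal element of `B` greater than `i_m` with
`σ⁻¹(i_{m+1}) < σ⁻¹(i_m)`.  Its output is characterized as the set of `i ∈ B`
whose `σ⁻¹`-value is smaller than that of every earlier element of `B`. -/
noncomputable def greedy {n : ℕ} (σ : Equiv.Perm (Fin (n + 1)))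
    (B : Finset (Fin (n + 1))) : Finset (Fin (n + 1)) :=
  B.filter (fun i => ∀ j ∈ B, j < i → σ⁻¹ i < σ⁻¹ j)


/-- for `A` in the image of `B ↦ B_σ`, the fiber
`{B ∈ 𝒫(σ) : B_σ = A}` equals `{B ∈ 𝒫(σ) : A ⊆ B ⊆ A^σ}`. -/
theorem stmt_13 {n : ℕ} (σ : Equiv.Perm (Fin (n + 1)))
    (A : Finset (Fin (n + 1)))
    (hA : ∃ B ⊆ permD σ, greedy σ B = A) :
    ∀ B ⊆ permD σ, (greedy σ B = A ↔ A ⊆ B ∧ B ⊆ upSet σ A) := by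
  obtain ⟨B₀, -, hB₀⟩ := hA
  have hdec : ∀ i ∈ A, ∀ j ∈ A, j < i → σ⁻¹ i < σ⁻¹ j := by
    intro i hi j hj hji
    rw [← hB₀] at hi hj
    simp only [greedy, Finset.mem_filter] at hi hj
    exact hi.2 j hj.1 hji
  intro B hB
  constructor
  · rintro rfl
    refine ⟨Finset.filter_subset _ _, ?_⟩
    intro j hj
    have hjD := hB hj
    simp only [permD, Finset.mem_filter, Finset.mem_univ, true_and] at hjD
    simp only [upSet, Finset.mem_filter, Finset.mem_univ, true_and]
    refine ⟨hjD.1, ?_⟩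
    obtain ⟨i, hiS, hmin⟩ := Finset.exists_min_image (B.filter (· ≤ j)) (fun k => σ⁻¹ k)
      ⟨j, Finset.mem_filter.2 ⟨hj, le_refl j⟩⟩
    simp only [Finset.mem_filter] at hiS
    refine ⟨i, ?_, hiS.2, hmin j (Finset.mem_filter.2 ⟨hj, le_refl j⟩), le_of_lt hjD.2⟩
    simp only [greedy, Finset.mem_filter]
    refine ⟨hiS.1, fun k hk hki => ?_⟩
    have := hmin k (Finset.mem_filter.2 ⟨hk, le_trans (le_of_lt hki) hiS.2⟩)
    exact lt_of_le_of_ne this (by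
      intro h
      exact absurd (σ⁻¹.injective h) (ne_of_lt hki).symm)
  · rintro ⟨hAB, hBu⟩
    apply Finset.Subset.antisymm
    · intro i hi
      simp only [greedy, Finset.mem_filter] at hi
      have := hBu hi.1
      simp only [upSet, Finset.mem_filter, Finset.mem_univ, true_and] at this
      obtain ⟨-, a, ha, hai, hsa, -⟩ := this
      rcases eq_or_lt_of_le hai with h | h
      · exact h ▸ ha
      · exact absurd hsa (not_le.2 (hi.2 a (hAB ha) h))
    · intro i hi
      simp only [greedy, Finset.mem_filter]
      refine ⟨hAB hi, fun j hj hji => ?_⟩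
      have := hBu hj
      simp only [upSet, Finset.mem_filter, Finset.mem_univ, true_and] at this
      obtain ⟨-, a, ha, haj, hsa, -⟩ := this
      exact lt_of_lt_of_le (hdec i hi a ha (lt_of_le_of_lt haj hji)) hsa
end

section
/- In S_{k+1}, the supremum (join) in the Bruhat order of the set of permutations {ω_{0,k}·(1,k+1), ω_{0,k}·(2,k+1), …, ω_{0,k}·(k,k+1)} is the longest element ω_{0,k+1}. -/
open Finset Equiv

/-- Rank function: number of positions `≤ p` whose value is `≥ q`. -/
def rkf {n : ℕ} (σ : Equiv.Perm (Fin n)) (p q : ℕ) : ℕ :=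
  (Finset.univ.filter (fun a : Fin n => (a : ℕ) ≤ p ∧ q ≤ (σ a : ℕ))).card

lemma permLen_core {n : ℕ} (x : Equiv.Perm (Fin n)) (P Q : Fin n) (hPQ : P < Q)
    (hval : x P < x Q) :
    permLen x < permLen (Equiv.swap (x P) (x Q) * x) := by
  classical
  set y := Equiv.swap (x P) (x Q) * x with hy
  set t := Equiv.swap P Q with ht
  have hyt : ∀ c, y c = x (t c) := by
    intro c
    rw [hy, ← Equiv.mul_swap_eq_swap_mul]
    rfl
  have htt : ∀ c, t (t c) = c := fun c => Equiv.swap_apply_self P Q c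
  have htP : t P = Q := Equiv.swap_apply_left P Q
  have htQ : t Q = P := Equiv.swap_apply_right P Q
  set Ix := Finset.univ.filter (fun p : Fin n × Fin n => p.1 < p.2 ∧ x p.2 < x p.1) with hIx
  set Iy := Finset.univ.filter (fun p : Fin n × Fin n => p.1 < p.2 ∧ y p.2 < y p.1) with hIy
  have hPQmem : (P, Q) ∈ Iy := by
    simp only [hIy, Finset.mem_filter, Finset.mem_univ, true_and]
    exact ⟨hPQ, by rw [hyt, hyt, htP, htQ]; exact hval⟩
  set G : Fin n × Fin n → Fin n × Fin n :=
    fun p => if t p.1 < t p.2 then (t p.1, t p.2) else p with hG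
  have hmaps : ∀ p ∈ Ix, G p ∈ Iy.erase (P, Q) := by
    rintro ⟨a, b⟩ hp
    simp only [hIx, Finset.mem_filter, Finset.mem_univ, true_and] at hp
    obtain ⟨hab, hinv⟩ := hp
    rw [Finset.mem_erase]
    simp only [hG]
    by_cases hc : t a < t b
    · rw [if_pos hc]
      refine ⟨?_, ?_⟩
      · intro h
        have h1 : t a = P := (Prod.mk.injEq _ _ _ _).mp h |>.1
        have h2 : t b = Q := (Prod.mk.injEq _ _ _ _).mp h |>.2
        have : a = Q := by rw [← htt a, h1, htP]
        have hb : b = P := by rw [← htt b, h2, htQ]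
        rw [this, hb] at hab
        exact absurd hab (not_lt.mpr hPQ.le)
      · simp only [hIy, Finset.mem_filter, Finset.mem_univ, true_and]
        exact ⟨hc, by rw [hyt, hyt, htt, htt]; exact hinv⟩
    · rw [if_neg hc]
      have hne : ¬(a = P ∧ b = Q) := by
        rintro ⟨rfl, rfl⟩
        exact absurd hval (not_lt.mpr hinv.le)
      refine ⟨fun h => hne ⟨congrArg Prod.fst h, congrArg Prod.snd h⟩, ?_⟩
      simp only [hIy, Finset.mem_filter, Finset.mem_univ, true_and]
      refine ⟨hab, ?_⟩
      rw [hyt, hyt]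
      by_cases haP : a = P
      · have hbQ : b ≠ Q := fun h => hne ⟨haP, h⟩
        have hbP : b ≠ P := fun h => hab.ne (haP.trans h.symm)
        rw [Equiv.swap_apply_of_ne_of_ne hbP hbQ, haP, htP]
        rw [haP] at hinv
        exact hinv.trans hval
      · by_cases haQ : a = Q
        · exfalso
          apply hc
          have habQ : Q < b := by rw [← haQ]; exact hab
          have hbP : b ≠ P := by
            intro h
            rw [h] at habQ
            exact absurd habQ (not_lt.mpr hPQ.le)
          have hbQ : b ≠ Q := habQ.ne'
          rw [haQ, htQ, Equiv.swap_apply_of_ne_of_ne hbP hbQ]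
          exact hPQ.trans habQ
        · have hta : t a = a := Equiv.swap_apply_of_ne_of_ne haP haQ
          by_cases hbQ : b = Q
          · rw [hbQ, htQ, hta]
            have h2 : x Q < x a := by rw [← hbQ]; exact hinv
            exact hval.trans h2
          · by_cases hbP : b = P
            · exfalso
              apply hc
              rw [hta, hbP, htP]
              have h2 : a < P := by rw [← hbP]; exact hab
              exact h2.trans hPQ
            · exfalso
              apply hc
              rw [hta, Equiv.swap_apply_of_ne_of_ne hbP hbQ]
              exact hab
  have hinj : Set.InjOn G Ix := by
    rintro ⟨a1, b1⟩ h1 ⟨a2, b2⟩ h2 heq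
    simp only [hIx, Finset.coe_filter, Set.mem_setOf_eq, Finset.mem_univ, true_and] at h1 h2
    simp only [hG] at heq
    by_cases hc1 : t a1 < t b1 <;> by_cases hc2 : t a2 < t b2
    · rw [if_pos hc1, if_pos hc2] at heq
      obtain ⟨e1, e2⟩ := (Prod.mk.injEq _ _ _ _).mp heq
      exact Prod.ext (t.injective e1) (t.injective e2)
    · rw [if_pos hc1, if_neg hc2] at heq
      obtain ⟨e1, e2⟩ := (Prod.mk.injEq _ _ _ _).mp heq
      exfalso
      apply hc2
      rw [← e1, ← e2, htt, htt]
      exact h1.1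
    · rw [if_neg hc1, if_pos hc2] at heq
      obtain ⟨e1, e2⟩ := (Prod.mk.injEq _ _ _ _).mp heq
      exfalso
      apply hc1
      rw [e1, e2, htt, htt]
      exact h2.1
    · rw [if_neg hc1, if_neg hc2] at heq
      exact heq
  have h1 : Ix.card ≤ (Iy.erase (P, Q)).card :=
    Finset.card_le_card_of_injOn G hmaps hinj
  have h2 : (Iy.erase (P, Q)).card < Iy.card :=
    Finset.card_lt_card (Finset.erase_ssubset hPQmem)
  exact lt_of_le_of_lt h1 h2

lemma rkf_core {n : ℕ} (x : Equiv.Perm (Fin n)) (P Q : Fin n) (hPQ : P < Q)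
    (hval : x P < x Q) (p q : ℕ) :
    rkf x p q ≤ rkf (Equiv.swap (x P) (x Q) * x) p q := by
  classical
  set y := Equiv.swap (x P) (x Q) * x with hy
  have hyP : y P = x Q := by
    rw [hy]; simp [Equiv.swap_apply_left]
  have hyQ : y Q = x P := by
    rw [hy]; simp [Equiv.swap_apply_right]
  have hyo : ∀ a, a ≠ P → a ≠ Q → y a = x a := by
    intro a haP haQ
    rw [hy]
    simp only [Equiv.Perm.mul_apply]
    exact Equiv.swap_apply_of_ne_of_ne (x.injective.ne haP) (x.injective.ne haQ)
  by_cases hq : q ≤ (x P : ℕ)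
  · apply Finset.card_le_card
    intro a ha
    simp only [Finset.mem_filter, Finset.mem_univ, true_and] at ha ⊢
    refine ⟨ha.1, ?_⟩
    by_cases haP : a = P
    · subst haP; rw [hyP]; exact hq.trans (le_of_lt hval)
    · by_cases haQ : a = Q
      · subst haQ; rw [hyQ]; exact hq
      · rw [hyo a haP haQ]; exact ha.2
  · push_neg at hq
    apply Finset.card_le_card_of_injOn (fun a => if a = Q then P else a)
    · intro a ha
      simp only [Finset.mem_coe, Finset.mem_filter, Finset.mem_univ, true_and] at ha ⊢
      have haP : a ≠ P := by
        rintro rfl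
        exact absurd ha.2 (not_le.mpr hq)
      by_cases haQ : a = Q
      · subst haQ
        rw [if_pos rfl]
        refine ⟨le_trans (le_of_lt ?_) ha.1, by rw [hyP]; exact ha.2⟩
        exact hPQ
      · rw [if_neg haQ]
        exact ⟨ha.1, by rw [hyo a haP haQ]; exact ha.2⟩
    · intro a1 ha1 a2 ha2 heq
      simp only [Finset.coe_filter, Set.mem_setOf_eq, Finset.mem_univ, true_and] at ha1 ha2
      have hP1 : a1 ≠ P := by rintro rfl; exact absurd ha1.2 (not_le.mpr hq)
      have hP2 : a2 ≠ P := by rintro rfl; exact absurd ha2.2 (not_le.mpr hq)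
      simp only at heq
      by_cases h1 : a1 = Q <;> by_cases h2 : a2 = Q
      · rw [h1, h2]
      · rw [if_pos h1, if_neg h2] at heq; exact absurd heq.symm hP2
      · rw [if_neg h1, if_pos h2] at heq; exact absurd heq hP1
      · rwa [if_neg h1, if_neg h2] at heq

lemma step_mono {n : ℕ} {x y : Equiv.Perm (Fin n)}
    (hstep : (∃ a b : Fin n, a ≠ b ∧ y = Equiv.swap a b * x) ∧ permLen x < permLen y) :
    ∀ p q, rkf x p q ≤ rkf y p q := by
  obtain ⟨⟨a, b, hab, hy⟩, hlen⟩ := hstep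
  set P := x⁻¹ a with hP
  set Q := x⁻¹ b with hQ
  have hxP : x P = a := Equiv.apply_symm_apply x a
  have hxQ : x Q = b := Equiv.apply_symm_apply x b
  have hy' : y = Equiv.swap (x P) (x Q) * x := by rw [hxP, hxQ]; exact hy
  have hx' : x = Equiv.swap (x P) (x Q) * y := by
    rw [hy', ← mul_assoc, Equiv.swap_mul_self, one_mul]
  have hPQ : P ≠ Q := fun h => hab (by rw [← hxP, ← hxQ, h])
  have hyP : y P = x Q := by rw [hy']; simp [Equiv.swap_apply_left]
  have hyQ : y Q = x P := by rw [hy']; simp [Equiv.swap_apply_right]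
  have hvne : x P ≠ x Q := x.injective.ne hPQ
  rcases lt_or_gt_of_ne hPQ with hlt | hgt
  · rcases lt_or_gt_of_ne hvne with hv | hv
    · intro p q
      rw [hy']
      exact rkf_core x P Q hlt hv p q
    · exfalso
      have h1 : y P < y Q := by rw [hyP, hyQ]; exact hv
      have := permLen_core y P Q hlt h1
      rw [hyP, hyQ, Equiv.swap_comm, ← hx'] at this
      omega
  · rcases lt_or_gt_of_ne hvne with hv | hv
    · exfalso
      have h1 : y Q < y P := by rw [hyP, hyQ]; exact hv
      have := permLen_core y Q P hgt h1
      rw [hyP, hyQ, ← hx'] at this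
      omega
    · intro p q
      have := rkf_core x Q P hgt hv p q
      rwa [Equiv.swap_comm, ← hy'] at this

lemma bruhat_rkf_mono {n : ℕ} {x y : Equiv.Perm (Fin n)} (h : permBruhatLE x y) :
    ∀ p q, rkf x p q ≤ rkf y p q := by
  induction h with
  | refl => exact fun _ _ => le_rfl
  | tail _ hstep ih =>
    intro p q
    exact (ih p q).trans (step_mono hstep p q)

lemma permLen_le {n : ℕ} (σ : Equiv.Perm (Fin n)) : permLen σ ≤ n * n := by
  unfold permLen
  calc _ ≤ (Finset.univ : Finset (Fin n × Fin n)).card := Finset.card_filter_le _ _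
    _ = n * n := by simp

lemma bruhat_le_top {k : ℕ} (w0K : Equiv.Perm (Fin (k + 1)))
    (hw0K : ∀ i : Fin (k + 1), (w0K i : ℕ) = k - (i : ℕ)) (z : Equiv.Perm (Fin (k + 1))) :
    permBruhatLE z w0K := by
  suffices h : ∀ n : ℕ, ∀ z : Equiv.Perm (Fin (k + 1)),
      (k + 1) * (k + 1) + 1 - permLen z ≤ n → permBruhatLE z w0K by
    exact h ((k + 1) * (k + 1) + 1) z (by omega)
  intro n
  induction n with
  | zero =>
    intro z hz
    have := permLen_le z
    omega
  | succ n ih =>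
    intro z hz
    by_cases hzw : z = w0K
    · subst hzw; exact Relation.ReflTransGen.refl
    · have hasc : ∃ P Q : Fin (k + 1), P < Q ∧ z P < z Q := by
        by_contra hno
        push_neg at hno
        apply hzw
        have hd : ∀ P Q : Fin (k + 1), P < Q → z Q < z P := by
          intro P Q h
          exact lt_of_le_of_ne (hno P Q h) (z.injective.ne h.ne')
        have h1 : ∀ m : ℕ, ∀ hm : m < k + 1, (z ⟨m, hm⟩ : ℕ) + m ≤ k := by
          intro m
          induction m with
          | zero =>
            intro hm
            have := (z ⟨0, hm⟩).isLt
            omega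
          | succ m ihm =>
            intro hm
            have hm' : m < k + 1 := by omega
            have hlt := hd ⟨m, hm'⟩ ⟨m + 1, hm⟩ (by simp [Fin.lt_def])
            rw [Fin.lt_def] at hlt
            have := ihm hm'
            omega
        have h2 : ∀ d : ℕ, ∀ m : ℕ, ∀ hm : m + d = k, d ≤ (z ⟨m, by omega⟩ : ℕ) := by
          intro d
          induction d with
          | zero => intro m hm; exact Nat.zero_le _
          | succ d ihd =>
            intro m hm
            have h' := ihd (m + 1) (by omega)
            have hlt := hd ⟨m, by omega⟩ ⟨m + 1, by omega⟩ (by simp [Fin.lt_def])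
            rw [Fin.lt_def] at hlt
            omega
        apply Equiv.ext
        intro j
        apply Fin.ext
        rw [hw0K j]
        have e1 := h1 (j : ℕ) j.isLt
        have e2 := h2 (k - (j : ℕ)) (j : ℕ) (by omega)
        simp only [Fin.eta] at e1 e2
        omega
      obtain ⟨P, Q, hPQ, hv⟩ := hasc
      have hcore := permLen_core z P Q hPQ hv
      refine Relation.ReflTransGen.head ⟨⟨z P, z Q, ne_of_lt hv, rfl⟩, hcore⟩ (ih _ ?_)
      have := permLen_le (Equiv.swap (z P) (z Q) * z)
      omega

lemma card_filter_lt_val {k m : ℕ} (hm : m ≤ k + 1) :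
    (Finset.univ.filter fun b : Fin (k + 1) => (b : ℕ) < m).card = m := by
  have h : (Finset.univ.filter fun b : Fin (k + 1) => (b : ℕ) < m).card
      = (Finset.range m).card := by
    refine Finset.card_bij (fun b _ => (b : ℕ)) ?_ ?_ ?_
    · intro a ha
      simp only [Finset.mem_filter, Finset.mem_univ, true_and] at ha
      simpa using ha
    · intro a ha b hb h
      exact Fin.ext h
    · intro m' hm'
      simp only [Finset.mem_range] at hm'
      exact ⟨⟨m', by omega⟩, by simp [hm'], rfl⟩
  rw [h, Finset.card_range]

lemma card_filter_le_val {k m : ℕ} (hm : m ≤ k) :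
    (Finset.univ.filter fun b : Fin (k + 1) => (b : ℕ) ≤ m).card = m + 1 := by
  have h : (Finset.univ.filter fun b : Fin (k + 1) => (b : ℕ) ≤ m).card
      = (Finset.range (m + 1)).card := by
    refine Finset.card_bij (fun b _ => (b : ℕ)) ?_ ?_ ?_
    · intro a ha
      simp only [Finset.mem_filter, Finset.mem_univ, true_and] at ha
      simp only [Finset.mem_range]
      omega
    · intro a ha b hb h
      exact Fin.ext h
    · intro m' hm'
      simp only [Finset.mem_range] at hm'
      exact ⟨⟨m', by omega⟩, by simp; omega, rfl⟩
  rw [h, Finset.card_range]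

/-- in `S_{k+1}` (modelled on `Fin (k+1)`, `0`-indexed), the Bruhat
supremum of `{ω_{0,k}·(i,k+1) : 1 ≤ i ≤ k}` is the longest element `ω_{0,k+1}`.
Here `w0k` is `ω_{0,k}` (reversing `{1,…,k}`, fixing `k+1`) and `w0K = ω_{0,k+1}`. -/
theorem stmt_15 {k : ℕ} (w0k w0K : Equiv.Perm (Fin (k + 1)))
    (hw0k : ∀ i : Fin (k + 1), (w0k i : ℕ) = if (i : ℕ) < k then k - 1 - (i : ℕ) else k)
    (hw0K : ∀ i : Fin (k + 1), (w0K i : ℕ) = k - (i : ℕ)) :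
    (∀ i : Fin k,
      permBruhatLE (w0k * Equiv.swap (Fin.castSucc i) (Fin.last k)) w0K) ∧
    (∀ z : Equiv.Perm (Fin (k + 1)),
      (∀ i : Fin k,
        permBruhatLE (w0k * Equiv.swap (Fin.castSucc i) (Fin.last k)) z) →
      permBruhatLE w0K z) := by
  constructor
  · intro i
    exact bruhat_le_top w0K hw0K _
  · intro z hz
    have hrk : ∀ i : Fin k, ∀ p q,
        rkf (w0k * Equiv.swap (Fin.castSucc i) (Fin.last k)) p q ≤ rkf z p q := by
      intro i
      exact bruhat_rkf_mono (hz i)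
    have key : ∀ m : ℕ, ∀ hm : m < k + 1, (z ⟨m, hm⟩ : ℕ) = k - m := by
      intro m
      induction m using Nat.strong_induction_on with
      | _ m ihm =>
        intro hm
        have hlow : k - m ≤ (z ⟨m, hm⟩ : ℕ) := by
          by_cases hmk : m < k
          · set i : Fin k := ⟨m, hmk⟩ with hi
            set u := w0k * Equiv.swap (Fin.castSucc i) (Fin.last k) with hu
            have hufull : ∀ b : Fin (k + 1), (b : ℕ) ≤ m → k - m ≤ (u b : ℕ) := by
              intro b hb
              rw [hu]
              simp only [Equiv.Perm.mul_apply]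
              by_cases hbm : (b : ℕ) = m
              · have : b = Fin.castSucc i := by
                  apply Fin.ext
                  simp [hi, hbm]
                rw [this, Equiv.swap_apply_left, hw0k]
                simp only [Fin.val_last, lt_irrefl, if_false]
                omega
              · have hb1 : b ≠ Fin.castSucc i := by
                  intro h
                  apply hbm
                  rw [h]
                  simp [hi]
                have hb2 : b ≠ Fin.last k := by
                  intro h
                  rw [h] at hb
                  simp only [Fin.val_last] at hb
                  omega
                rw [Equiv.swap_apply_of_ne_of_ne hb1 hb2, hw0k]
                have hbk : (b : ℕ) < k := by omega
                rw [if_pos hbk]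
                omega
            by_contra hcon
            push_neg at hcon
            have hle : (Finset.univ.filter fun b : Fin (k + 1) => (b : ℕ) ≤ m).card ≤
                rkf u m (k - m) := by
              apply Finset.card_le_card
              intro b hb
              simp only [Finset.mem_filter, Finset.mem_univ, true_and] at hb ⊢
              exact ⟨hb, hufull b hb⟩
            have hcard1 : (Finset.univ.filter fun b : Fin (k + 1) => (b : ℕ) ≤ m).card
                = m + 1 := card_filter_le_val (by omega)
            have hz2 : rkf z m (k - m) ≤ m := by
              have hsub : (Finset.univ.filter fun b : Fin (k + 1) =>
                  (b : ℕ) ≤ m ∧ k - m ≤ (z b : ℕ)) ⊆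
                  (Finset.univ.filter fun b : Fin (k + 1) => (b : ℕ) < m) := by
                intro b hb
                simp only [Finset.mem_filter, Finset.mem_univ, true_and] at hb ⊢
                rcases Nat.lt_or_ge (b : ℕ) m with h | h
                · exact h
                · exfalso
                  have hbm : (b : ℕ) = m := by omega
                  have : b = ⟨m, hm⟩ := Fin.ext hbm
                  rw [this] at hb
                  exact absurd hb.2 (not_le.mpr hcon)
              calc rkf z m (k - m) ≤ _ := Finset.card_le_card hsub
                _ = m := card_filter_lt_val (by omega)
            have hmono : rkf u m (k - m) ≤ rkf z m (k - m) := hrk i m (k - m)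
            unfold rkf at hmono hle hz2
            omega
          · have : k - m = 0 := by omega
            omega
        have hup : (z ⟨m, hm⟩ : ℕ) ≤ k := by
          have := (z ⟨m, hm⟩).isLt
          omega
        set v := (z ⟨m, hm⟩ : ℕ) with hv
        by_cases hvm : v = k - m
        · exact hvm
        · exfalso
          set b := k - v with hb
          have hbm : b < m := by omega
          have hzb := ihm b hbm (by omega)
          have : z ⟨b, by omega⟩ = z ⟨m, hm⟩ := by
            apply Fin.ext
            rw [hzb, ← hv]
            omega
          have := z.injective this
          have := Fin.mk.inj_iff.mp this
          omega
    have hzeq : z = w0K := by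
      apply Equiv.ext
      intro j
      apply Fin.ext
      rw [hw0K j]
      have := key (j : ℕ) j.isLt
      simpa using this
    rw [hzeq]
    exact Relation.ReflTransGen.refl
end

section
/- Let σ ∈ S_n, B ⊆ 𝒟(σ) nonempty, and let B_σ = {i₁ < … < i_k} be the output of the greedy algorithm. Set σ^B = (i₁,…,i_k,n)·σ. Then σ^B is the supremum of the set {(i,n)·σ : i ∈ B} in the Bruhat order on S_n, i.e. it is an upper bound of this set and every common upper bound z satisfies σ^B ≤ z. -/
open scoped Classical

/-- `σ^B = (i₁,…,i_k,n)·σ = t_{i_k}⋯t_{i_1}·σ`, where `B_σ = {i₁ < … < i_k}`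
is the greedy output and `t_i = (i,n)`. -/
noncomputable def sigmaB {n : ℕ} (σ : Equiv.Perm (Fin (n + 1)))
    (B : Finset (Fin (n + 1))) : Equiv.Perm (Fin (n + 1)) :=
  ((((greedy σ B).sort (· ≤ ·)).map (fun i => Equiv.swap i (Fin.last n))).reverse).prod * σ


section BruhatAux
open Equiv Finset

noncomputable def dmat {n : ℕ} (w : Equiv.Perm (Fin n)) (p q : Fin n) : ℕ :=
  (Finset.univ.filter (fun a => a ≤ p ∧ q ≤ w a)).card

lemma swap_mul_apply {n : ℕ} (w : Equiv.Perm (Fin n)) (p₁ p₂ : Fin n) :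
    ∀ x, (Equiv.swap (w p₁) (w p₂) * w) x = w (Equiv.swap p₁ p₂ x) := by
  intro x
  simp only [Equiv.Perm.mul_apply]
  rcases eq_or_ne x p₁ with rfl|h1
  · simp [Equiv.swap_apply_left]
  rcases eq_or_ne x p₂ with rfl|h2
  · simp [Equiv.swap_apply_right]
  · rw [Equiv.swap_apply_of_ne_of_ne h1 h2,
      Equiv.swap_apply_of_ne_of_ne (by simpa using h1) (by simpa using h2)]

lemma swapLen {n : ℕ} (w : Equiv.Perm (Fin n)) (p₁ p₂ : Fin n) (h : p₁ < p₂)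
    (hv : w p₂ < w p₁) :
    permLen (Equiv.swap (w p₁) (w p₂) * w) < permLen w := by
  classical
  set v := Equiv.swap (w p₁) (w p₂) * w with hvdef
  have hva : ∀ x, v x = w (Equiv.swap p₁ p₂ x) := swap_mul_apply w p₁ p₂
  set s : Equiv.Perm (Fin n) := Equiv.swap p₁ p₂ with hs
  set Iv := (Finset.univ.filter (fun p : Fin n × Fin n => p.1 < p.2 ∧ v p.2 < v p.1)) with hIv
  set Iw := (Finset.univ.filter (fun p : Fin n × Fin n => p.1 < p.2 ∧ w p.2 < w p.1)) with hIw
  have hmem : (p₁, p₂) ∈ Iw := by simp [hIw, h, hv]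
  set F : Fin n × Fin n → Fin n × Fin n :=
    fun p => if s p.1 < s p.2 then (s p.1, s p.2) else p with hF
  have key : ∀ x y : Fin n, x < y → v y < v x →
      ((F (x, y)).1 < (F (x, y)).2 ∧ w (F (x, y)).2 < w (F (x, y)).1) ∧ F (x, y) ≠ (p₁, p₂) := by
    intro x y hlt hinv
    rw [hva, hva] at hinv
    by_cases hb : s x < s y
    · have hFxy : F (x, y) = (s x, s y) := by simp [hF, hb]
      rw [hFxy]
      refine ⟨⟨hb, hinv⟩, ?_⟩
      intro hc
      have hx : s x = p₁ := congrArg Prod.fst hc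
      have hy : s y = p₂ := congrArg Prod.snd hc
      have hx' : x = p₂ := by
        have := congrArg s hx; rwa [Equiv.swap_apply_self, hs, Equiv.swap_apply_left] at this
      have hy' : y = p₁ := by
        have := congrArg s hy; rwa [Equiv.swap_apply_self, hs, Equiv.swap_apply_right] at this
      rw [hx', hy'] at hlt; exact absurd (h.trans hlt) (lt_irrefl _)
    · have hFxy : F (x, y) = (x, y) := by simp [hF, hb]
      rw [hFxy]
      have hsy : s y < s x := by
        rcases lt_trichotomy (s x) (s y) with h'|h'|h'
        · exact absurd h' hb
        · exact absurd (s.injective h') (ne_of_lt hlt)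
        · exact h'
      have hxp2 : x ≠ p₂ := by
        intro hc
        have hy1 : y ≠ p₁ := by intro hc2; rw [hc, hc2] at hlt; exact absurd (h.trans hlt) (lt_irrefl _)
        have hy2 : y ≠ p₂ := by intro hc2; rw [hc, hc2] at hlt; exact lt_irrefl _ hlt
        rw [hc, hs] at hsy
        rw [Equiv.swap_apply_right, Equiv.swap_apply_of_ne_of_ne hy1 hy2] at hsy
        rw [hc] at hlt
        exact absurd (h.trans (hlt.trans hsy)) (lt_irrefl _)
      have hyp1 : y ≠ p₁ := by
        intro hc
        have hx1 : x ≠ p₁ := by intro hc2; rw [hc, hc2] at hlt; exact lt_irrefl _ hlt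
        rw [hc, hs] at hsy
        rw [Equiv.swap_apply_left, Equiv.swap_apply_of_ne_of_ne hx1 hxp2] at hsy
        rw [hc] at hlt
        exact absurd (h.trans (hsy.trans hlt)) (lt_irrefl _)
      constructor
      · refine ⟨hlt, ?_⟩
        by_cases hx1 : x = p₁
        · have hy2 : y ≠ p₂ := by
            intro hc; rw [hx1, hc, hs, Equiv.swap_apply_left, Equiv.swap_apply_right] at hinv
            exact absurd (hinv.trans hv) (lt_irrefl _)
          rw [hx1, hs, Equiv.swap_apply_left, Equiv.swap_apply_of_ne_of_ne hyp1 hy2] at hinv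
          rw [hx1]
          exact hinv.trans hv
        · by_cases hy2 : y = p₂
          · rw [hy2, hs, Equiv.swap_apply_right, Equiv.swap_apply_of_ne_of_ne hx1 hxp2] at hinv
            rw [hy2]
            exact hv.trans hinv
          · rw [hs, Equiv.swap_apply_of_ne_of_ne hx1 hxp2,
              Equiv.swap_apply_of_ne_of_ne hyp1 hy2] at hsy
            exact absurd hsy (not_lt.2 hlt.le)
      · intro hc
        have hx : x = p₁ := congrArg Prod.fst hc
        have hy : y = p₂ := congrArg Prod.snd hc
        rw [hx, hy, hs, Equiv.swap_apply_left, Equiv.swap_apply_right] at hinv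
        exact absurd (hinv.trans hv) (lt_irrefl _)
  have hinj : ∀ x ∈ Iv, F x ∈ Iw.erase (p₁, p₂) := by
    rintro ⟨x, y⟩ hxy
    simp only [hIv, Finset.mem_filter, Finset.mem_univ, true_and] at hxy
    obtain ⟨⟨h1, h2⟩, h3⟩ := key x y hxy.1 hxy.2
    exact Finset.mem_erase.2 ⟨h3, by simp [hIw, h1, h2]⟩
  have hinjOn : Set.InjOn F Iv := by
    rintro ⟨x, y⟩ hxy ⟨x', y'⟩ hxy' heq
    simp only [hIv, Finset.coe_filter, Set.mem_setOf_eq, Finset.mem_univ, true_and] at hxy hxy'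
    simp only [hF] at heq
    by_cases hb : s x < s y <;> by_cases hb' : s x' < s y'
    · rw [if_pos hb, if_pos hb'] at heq
      exact Prod.ext (s.injective (congrArg Prod.fst heq)) (s.injective (congrArg Prod.snd heq))
    · rw [if_pos hb, if_neg hb'] at heq
      obtain ⟨h1, h2⟩ := Prod.mk.inj heq
      exfalso
      apply hb'
      rw [← h1, ← h2, Equiv.swap_apply_self, Equiv.swap_apply_self]
      exact hxy.1
    · rw [if_neg hb, if_pos hb'] at heq
      obtain ⟨h1, h2⟩ := Prod.mk.inj heq
      exfalso
      apply hb
      rw [h1, h2, Equiv.swap_apply_self, Equiv.swap_apply_self]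
      exact hxy'.1
    · rw [if_neg hb, if_neg hb'] at heq; exact heq
  have hcard : Iv.card ≤ (Iw.erase (p₁, p₂)).card :=
    Finset.card_le_card_of_injOn F hinj hinjOn
  rw [Finset.card_erase_of_mem hmem] at hcard
  have hpos : 0 < Iw.card := Finset.card_pos.2 ⟨_, hmem⟩
  show Iv.card < Iw.card
  omega


lemma dmat_sum {n : ℕ} (w : Equiv.Perm (Fin n)) (p q : Fin n) :
    dmat w p q = ∑ a : Fin n, (if a ≤ p ∧ q ≤ w a then 1 else 0) := by
  rw [dmat, Finset.card_filter]

lemma sum_split {n : ℕ} (p₁ p₂ : Fin n) (hne : p₁ ≠ p₂) (f : Fin n → ℕ) :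
    ∑ a : Fin n, f a = f p₁ + f p₂ + ∑ a ∈ Finset.univ \ {p₁, p₂}, f a := by
  have hsub : ({p₁, p₂} : Finset (Fin n)) ⊆ Finset.univ := Finset.subset_univ _
  rw [← Finset.sum_sdiff hsub, Finset.sum_pair hne, add_comm]

lemma dotSwap {n : ℕ} (w : Equiv.Perm (Fin n)) (p₁ p₂ : Fin n) (h : p₁ < p₂)
    (hv : w p₁ < w p₂) (p q : Fin n) :
    dmat (Equiv.swap (w p₁) (w p₂) * w) p q =
      dmat w p q + (if p₁ ≤ p ∧ p < p₂ ∧ w p₁ < q ∧ q ≤ w p₂ then 1 else 0) := by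
  classical
  set v := Equiv.swap (w p₁) (w p₂) * w with hvdef
  have hne : p₁ ≠ p₂ := ne_of_lt h
  have hv1 : v p₁ = w p₂ := by simp [hvdef, Equiv.swap_apply_left]
  have hv2 : v p₂ = w p₁ := by simp [hvdef, Equiv.swap_apply_right]
  have hva : ∀ a, a ≠ p₁ → a ≠ p₂ → v a = w a := by
    intro a h1 h2
    simp only [hvdef, Equiv.Perm.mul_apply]
    exact Equiv.swap_apply_of_ne_of_ne (fun hc => h1 (w.injective hc)) (fun hc => h2 (w.injective hc))
  rw [dmat_sum, dmat_sum, sum_split p₁ p₂ hne, sum_split p₁ p₂ hne]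
  have hrest : ∑ a ∈ Finset.univ \ {p₁, p₂}, (if a ≤ p ∧ q ≤ v a then 1 else 0) =
      ∑ a ∈ Finset.univ \ {p₁, p₂}, (if a ≤ p ∧ q ≤ w a then 1 else 0) := by
    apply Finset.sum_congr rfl
    intro a ha
    simp only [Finset.mem_sdiff, Finset.mem_insert, Finset.mem_singleton] at ha
    rw [hva a (fun hc => ha.2 (by simp [hc])) (fun hc => ha.2 (by simp [hc]))]
  rw [hrest, hv1, hv2]
  have i1 : p₂ ≤ p → p₁ ≤ p := fun hh => (h.le).trans hh
  have i2 : q ≤ w p₁ → q ≤ w p₂ := fun hh => hh.trans hv.le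
  have i3 : p < p₂ → ¬ p₂ ≤ p := fun hh => not_le.2 hh
  have i4 : w p₁ < q → ¬ q ≤ w p₁ := fun hh => not_le.2 hh
  by_cases a1 : p₁ ≤ p <;> by_cases a2 : p₂ ≤ p <;>
    by_cases a3 : q ≤ w p₁ <;> by_cases a4 : q ≤ w p₂ <;>
    simp [a1, a2, a3, a4, not_le.1, lt_of_not_ge, i1 ,i2] <;> omega


/-- Easy direction: a Bruhat step increases the dot matrix. -/
lemma dmat_le_of_step {n : ℕ} (x y : Equiv.Perm (Fin n))
    (hstep : (∃ a b : Fin n, a ≠ b ∧ y = Equiv.swap a b * x) ∧ permLen x < permLen y)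
    (p q : Fin n) : dmat x p q ≤ dmat y p q := by
  obtain ⟨⟨a, b, hab, hy⟩, hlen⟩ := hstep
  set pa := x⁻¹ a with hpa
  set pb := x⁻¹ b with hpb
  have hxa : x pa = a := by simp [hpa]
  have hxb : x pb = b := by simp [hpb]
  have hpab : pa ≠ pb := fun hc => hab (by rw [← hxa, ← hxb, hc])
  rcases lt_or_gt_of_ne hpab with hplt | hpgt
  · rcases lt_or_gt_of_ne hab with hvlt | hvgt
    · -- positions and values both increasing: dotSwap applies
      have := dotSwap x pa pb hplt (by rw [hxa, hxb]; exact hvlt) p q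
      rw [hxa, hxb, ← hy] at this
      omega
    · -- positions increasing, values decreasing: swapLen contradicts hlen
      exfalso
      have := swapLen x pa pb hplt (by rw [hxa, hxb]; exact hvgt)
      rw [hxa, hxb, ← hy] at this
      omega
  · rcases lt_or_gt_of_ne hab with hvlt | hvgt
    · exfalso
      have := swapLen x pb pa hpgt (by rw [hxa, hxb]; exact hvlt)
      rw [hxa, hxb, Equiv.swap_comm, ← hy] at this
      omega
    · have := dotSwap x pb pa hpgt (by rw [hxa, hxb]; exact hvgt) p q
      rw [hxa, hxb, Equiv.swap_comm, ← hy] at this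
      omega

lemma dmat_le_of_bruhat {n : ℕ} (u v : Equiv.Perm (Fin n)) (h : permBruhatLE u v)
    (p q : Fin n) : dmat u p q ≤ dmat v p q := by
  induction h with
  | refl => exact le_refl _
  | tail _ hstep ih => exact ih.trans (dmat_le_of_step _ _ hstep p q)

/-- Key construction for the hard direction. -/
lemma exists_lower {n : ℕ} (u v : Equiv.Perm (Fin n)) (huv : u ≠ v)
    (hdot : ∀ p q, dmat u p q ≤ dmat v p q) :
    ∃ v' : Equiv.Perm (Fin n), permLen v' < permLen v ∧
      (∀ p q, dmat u p q ≤ dmat v' p q) ∧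
      (∃ a b : Fin n, a ≠ b ∧ v = Equiv.swap a b * v') := by
  classical
  -- the first position where u and v differ
  set D := Finset.univ.filter (fun a : Fin n => u a ≠ v a) with hD
  have hDne : D.Nonempty := by
    by_contra hc
    rw [Finset.not_nonempty_iff_eq_empty] at hc
    apply huv
    apply Equiv.ext
    intro a
    by_contra hne
    have : a ∈ D := by simp [hD, hne]
    rw [hc] at this
    exact absurd this (Finset.notMem_empty a)
  set i := D.min' hDne with hi
  have hiD : i ∈ D := Finset.min'_mem D hDne
  have hine : u i ≠ v i := by simpa [hD] using hiD
  have hagree : ∀ a, a < i → u a = v a := by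
    intro a ha
    by_contra hne
    have : a ∈ D := by simp [hD, hne]
    exact absurd (Finset.min'_le D a this) (not_le.2 ha)
  -- u i < v i
  have hui_lt : u i < v i := by
    rcases lt_or_gt_of_ne hine with h' | h'
    · exact h'
    exfalso
    have hXsub : Finset.univ.filter (fun a => a ≤ i ∧ u i ≤ v a) ⊆
        (Finset.univ.filter (fun a => a ≤ i ∧ u i ≤ u a)).erase i := by
      intro a ha
      simp only [Finset.mem_filter, Finset.mem_univ, true_and] at ha
      have hai : a < i := by
        rcases lt_or_eq_of_le ha.1 with h'' | h''
        · exact h''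
        · exfalso; rw [h''] at ha; exact absurd (ha.2.trans_lt h') (lt_irrefl _)
      rw [Finset.mem_erase]
      refine ⟨ne_of_lt hai, ?_⟩
      simp only [Finset.mem_filter, Finset.mem_univ, true_and]
      exact ⟨ha.1, by rw [hagree a hai]; exact ha.2⟩
    have himem : i ∈ Finset.univ.filter (fun a => a ≤ i ∧ u i ≤ u a) := by
      simp
    have h1 : dmat v i (u i) ≤ dmat u i (u i) - 1 := by
      have := Finset.card_le_card hXsub
      rw [Finset.card_erase_of_mem himem] at this
      exact this
    have h2 : 0 < dmat u i (u i) := Finset.card_pos.2 ⟨i, himem⟩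
    have := hdot i (u i)
    unfold dmat at h1 h2 this
    omega
  -- the position k
  set K := Finset.univ.filter (fun m : Fin n => i < m ∧ u i ≤ v m ∧ v m < v i) with hK
  have hKne : K.Nonempty := by
    refine ⟨v⁻¹ (u i), ?_⟩
    have hvm : v (v⁻¹ (u i)) = u i := by simp
    simp only [hK, Finset.mem_filter, Finset.mem_univ, true_and]
    refine ⟨?_, by rw [hvm], by rw [hvm]; exact hui_lt⟩
    rcases lt_trichotomy (v⁻¹ (u i)) i with h' | h' | h'
    · exfalso
      have := hagree _ h'
      rw [hvm] at this
      exact absurd (u.injective this.symm) (ne_of_gt h')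
    · exfalso; rw [h'] at hvm; exact hine hvm.symm
    · exact h'
  set k := K.min' hKne with hk
  have hkK : k ∈ K := Finset.min'_mem K hKne
  have hik : i < k := by simpa [hK] using (Finset.mem_filter.1 hkK).2.1
  have huivk : u i ≤ v k := (Finset.mem_filter.1 hkK).2.2.1
  have hvkvi : v k < v i := (Finset.mem_filter.1 hkK).2.2.2
  have hkmin : ∀ m, i < m → m < k → ¬(u i ≤ v m ∧ v m < v i) := by
    intro m h1 h2 hc
    have : m ∈ K := by simp [hK, h1, hc.1, hc.2]
    exact absurd (Finset.min'_le K m this) (not_le.2 h2)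
  -- the lowered permutation
  set v' := Equiv.swap (v i) (v k) * v with hv'
  have hv'i : v' i = v k := by simp [hv', Equiv.swap_apply_left]
  have hv'k : v' k = v i := by simp [hv', Equiv.swap_apply_right]
  have hveq : v = Equiv.swap (v k) (v i) * v' := by
    rw [hv', Equiv.swap_comm, ← mul_assoc, Equiv.swap_mul_self, one_mul]
  have hlen : permLen v' < permLen v := swapLen v i k hik hvkvi
  have hbox : ∀ p q, dmat v p q = dmat v' p q +
      (if i ≤ p ∧ p < k ∧ v k < q ∧ q ≤ v i then 1 else 0) := by
    intro p q
    have := dotSwap v' i k hik (by rw [hv'i, hv'k]; exact hvkvi) p q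
    rw [hv'i, hv'k, ← hveq] at this
    rw [this]
  refine ⟨v', hlen, ?_, v k, v i, ne_of_lt hvkvi, hveq⟩
  intro p q
  by_cases hbx : i ≤ p ∧ p < k ∧ v k < q ∧ q ≤ v i
  · -- the strict inequality in the box
    obtain ⟨hip, hpk, hvkq, hqvi⟩ := hbx
    -- counting argument
    have key : dmat u p q + 1 ≤ dmat v p q := by
      set A := Finset.univ.filter (fun a => a ≤ p ∧ q ≤ u a) with hA
      set A' := Finset.univ.filter (fun a => a ≤ p ∧ u i ≤ u a) with hA'
      set Bv := Finset.univ.filter (fun a => a ≤ p ∧ u i ≤ v a) with hBv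
      set C := Finset.univ.filter (fun a => a ≤ p ∧ q ≤ v a) with hC
      have huiq : u i < q := lt_of_le_of_lt huivk hvkq
      -- step 1
      have s1 : (A.filter (fun a => ¬ a < i)).card + 1 ≤
          (A'.filter (fun a => ¬ a < i)).card := by
        have hins : insert i (A.filter (fun a => ¬ a < i)) ⊆
            A'.filter (fun a => ¬ a < i) := by
          intro a ha
          rcases Finset.mem_insert.1 ha with rfl | ha'
          · simp only [Finset.mem_filter, hA', Finset.mem_univ, true_and]
            exact ⟨⟨hip, le_refl _⟩, lt_irrefl _⟩
          · simp only [Finset.mem_filter, hA, Finset.mem_univ, true_and] at ha'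
            simp only [Finset.mem_filter, hA', Finset.mem_univ, true_and]
            exact ⟨⟨ha'.1.1, (le_of_lt huiq).trans ha'.1.2⟩, ha'.2⟩
        have hnotmem : i ∉ A.filter (fun a => ¬ a < i) := by
          simp only [Finset.mem_filter, hA, Finset.mem_univ, true_and, not_and]
          intro h' _
          exact absurd h'.2 (not_le.2 huiq)
        have := Finset.card_le_card hins
        rw [Finset.card_insert_of_notMem hnotmem] at this
        omega
      -- step 2
      have s2 : (A'.filter (fun a => ¬ a < i)).card ≤
          (Bv.filter (fun a => ¬ a < i)).card := by
        have heqlt : A'.filter (fun a => a < i) = Bv.filter (fun a => a < i) := by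
          ext a
          simp only [Finset.mem_filter, hA', hBv, Finset.mem_univ, true_and]
          constructor
          · rintro ⟨⟨h1, h2⟩, h3⟩; exact ⟨⟨h1, by rw [← hagree a h3]; exact h2⟩, h3⟩
          · rintro ⟨⟨h1, h2⟩, h3⟩; exact ⟨⟨h1, by rw [hagree a h3]; exact h2⟩, h3⟩
        have hc1 : (A'.filter (fun a => a < i)).card + (A'.filter (fun a => ¬ a < i)).card
            = A'.card := Finset.card_filter_add_card_filter_not (fun a => a < i)
        have hc2 : (Bv.filter (fun a => a < i)).card + (Bv.filter (fun a => ¬ a < i)).card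
            = Bv.card := Finset.card_filter_add_card_filter_not (fun a => a < i)
        have hcard : A'.card ≤ Bv.card := hdot p (u i)
        rw [heqlt] at hc1
        omega
      -- step 3
      have s3 : (Bv.filter (fun a => ¬ a < i)) ⊆ (C.filter (fun a => ¬ a < i)) := by
        intro a ha
        simp only [Finset.mem_filter, hBv, Finset.mem_univ, true_and, not_lt] at ha
        obtain ⟨⟨h1, h2⟩, h3⟩ := ha
        simp only [Finset.mem_filter, hC, Finset.mem_univ, true_and, not_lt]
        refine ⟨⟨h1, ?_⟩, h3⟩
        rcases lt_or_eq_of_le h3 with h' | h'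
        · have := hkmin a h' (lt_of_le_of_lt h1 hpk)
          have hvia : v i ≤ v a := by
            by_contra hc
            exact this ⟨h2, not_le.1 hc⟩
          exact hqvi.trans hvia
        · rw [← h']; exact hqvi
      -- step 4
      have s4 : A.filter (fun a => a < i) = C.filter (fun a => a < i) := by
        ext a
        simp only [Finset.mem_filter, hA, hC, Finset.mem_univ, true_and]
        constructor
        · rintro ⟨⟨h1, h2⟩, h3⟩; exact ⟨⟨h1, by rw [← hagree a h3]; exact h2⟩, h3⟩
        · rintro ⟨⟨h1, h2⟩, h3⟩; exact ⟨⟨h1, by rw [hagree a h3]; exact h2⟩, h3⟩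
      have hcA : (A.filter (fun a => a < i)).card + (A.filter (fun a => ¬ a < i)).card
          = A.card := Finset.card_filter_add_card_filter_not (fun a => a < i)
      have hcC : (C.filter (fun a => a < i)).card + (C.filter (fun a => ¬ a < i)).card
          = C.card := Finset.card_filter_add_card_filter_not (fun a => a < i)
      have s3' := Finset.card_le_card s3
      rw [s4] at hcA
      show A.card + 1 ≤ C.card
      omega
    have := hbox p q
    rw [if_pos ⟨hip, hpk, hvkq, hqvi⟩] at this
    omega
  · have := hbox p q
    rw [if_neg hbx, add_zero] at this
    rw [← this]
    exact hdot p q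

/-- Hard direction. -/
lemma bruhat_of_dmat_le {n : ℕ} : ∀ (N : ℕ) (v u : Equiv.Perm (Fin n)), permLen v ≤ N →
    (∀ p q, dmat u p q ≤ dmat v p q) → permBruhatLE u v := by
  intro N
  induction N with
  | zero =>
    intro v u hlen hdot
    by_cases huv : u = v
    · rw [huv]; exact Relation.ReflTransGen.refl
    · obtain ⟨v', hl, _, _⟩ := exists_lower u v huv hdot
      omega
  | succ N ih =>
    intro v u hlen hdot
    by_cases huv : u = v
    · rw [huv]; exact Relation.ReflTransGen.refl
    · obtain ⟨v', hl, hdot', a, b, hab, heq⟩ := exists_lower u v huv hdot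
      have h1 : permBruhatLE u v' := ih v' u (by omega) hdot'
      exact Relation.ReflTransGen.tail h1 ⟨⟨a, b, hab, heq⟩, hl⟩


/-- `d` of a transposition `(i, last)` times `σ`. -/
lemma dmat_swap_last {n : ℕ} (σ : Equiv.Perm (Fin (n + 1))) (i : Fin (n + 1))
    (hiL : i < Fin.last n) (hinv : σ⁻¹ i < σ⁻¹ (Fin.last n)) (p q : Fin (n + 1)) :
    dmat (Equiv.swap i (Fin.last n) * σ) p q = dmat σ p q +
      (if σ⁻¹ i ≤ p ∧ p < σ⁻¹ (Fin.last n) ∧ i < q ∧ q ≤ Fin.last n then 1 else 0) := by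
  have h1 : σ (σ⁻¹ i) = i := Equiv.apply_symm_apply σ i
  have h2 : σ (σ⁻¹ (Fin.last n)) = Fin.last n := Equiv.apply_symm_apply σ _
  have := dotSwap σ (σ⁻¹ i) (σ⁻¹ (Fin.last n)) hinv (by rw [h1, h2]; exact hiL) p q
  rwa [h1, h2] at this

/-- Master formula for products of transpositions along a greedy-like list. -/
lemma master {n : ℕ} : ∀ (l : List (Fin (n + 1))) (σ : Equiv.Perm (Fin (n + 1))),
    l.Pairwise (· < ·) →
    (∀ g ∈ l, g < Fin.last n ∧ σ⁻¹ g < σ⁻¹ (Fin.last n)) →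
    l.Pairwise (fun a b => σ⁻¹ b < σ⁻¹ a) →
    ∀ p q : Fin (n + 1),
    dmat ((l.map (fun i => Equiv.swap i (Fin.last n))).reverse.prod * σ) p q
      = dmat σ p q +
        (if p < σ⁻¹ (Fin.last n) ∧ ∃ g ∈ l, σ⁻¹ g ≤ p ∧ g < q then 1 else 0) := by
  intro l
  induction l with
  | nil =>
    intro σ _ _ _ p q
    simp
  | cons g t IH =>
    intro σ hsort hmem hdec p q
    have hgL : g < Fin.last n := (hmem g (List.mem_cons_self)).1
    have hginv : σ⁻¹ g < σ⁻¹ (Fin.last n) := (hmem g (List.mem_cons_self)).2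
    have hgt : ∀ h ∈ t, g < h := fun h hh => (List.pairwise_cons.1 hsort).1 h hh
    have hgdec : ∀ h ∈ t, σ⁻¹ h < σ⁻¹ g := fun h hh => (List.pairwise_cons.1 hdec).1 h hh
    set σ' := Equiv.swap g (Fin.last n) * σ with hσ'
    have hprod : ((g :: t).map (fun i => Equiv.swap i (Fin.last n))).reverse.prod * σ
        = (t.map (fun i => Equiv.swap i (Fin.last n))).reverse.prod * σ' := by
      rw [List.map_cons, List.reverse_cons, List.prod_append, List.prod_singleton, mul_assoc, hσ']
    have hσ'inv : ∀ x : Fin (n + 1), σ'⁻¹ x = σ⁻¹ (Equiv.swap g (Fin.last n) x) := by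
      intro x
      rw [hσ', mul_inv_rev, Equiv.Perm.mul_apply, Equiv.swap_inv]
    have hinvL : σ'⁻¹ (Fin.last n) = σ⁻¹ g := by
      rw [hσ'inv, Equiv.swap_apply_right]
    have hinvt : ∀ h ∈ t, σ'⁻¹ h = σ⁻¹ h := by
      intro h hh
      rw [hσ'inv, Equiv.swap_apply_of_ne_of_ne (ne_of_gt (hgt h hh))
        (ne_of_lt (hmem h (List.mem_cons_of_mem g hh)).1)]
    have IH' := IH σ' (List.pairwise_cons.1 hsort).2
      (fun h hh => ⟨(hmem h (List.mem_cons_of_mem g hh)).1, by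
        rw [hinvt h hh, hinvL]; exact hgdec h hh⟩)
      (by
        refine List.Pairwise.imp_of_mem ?_ (List.pairwise_cons.1 hdec).2
        intro a b ha hb hab
        rw [hinvt a ha, hinvt b hb]; exact hab) p q
    rw [hprod, IH']
    have hbox := dmat_swap_last σ g hgL hginv p q
    rw [← hσ'] at hbox
    rw [hbox]
    have hiff : (p < σ'⁻¹ (Fin.last n) ∧ ∃ h ∈ t, σ'⁻¹ h ≤ p ∧ h < q) ↔
        (p < σ⁻¹ g ∧ ∃ h ∈ t, σ⁻¹ h ≤ p ∧ h < q) := by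
      rw [hinvL]
      constructor
      · rintro ⟨h1, h, hht, h2, h3⟩
        exact ⟨h1, h, hht, by rw [← hinvt h hht]; exact h2, h3⟩
      · rintro ⟨h1, h, hht, h2, h3⟩
        exact ⟨h1, h, hht, by rw [hinvt h hht]; exact h2, h3⟩
    rw [if_congr hiff rfl rfl]
    have hqL : q ≤ Fin.last n := Fin.le_last q
    -- final case analysis
    by_cases c1 : σ⁻¹ g ≤ p ∧ p < σ⁻¹ (Fin.last n) ∧ g < q ∧ q ≤ Fin.last n
    · rw [if_pos c1]
      have c2 : ¬ (p < σ⁻¹ g ∧ ∃ h ∈ t, σ⁻¹ h ≤ p ∧ h < q) := by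
        rintro ⟨hc, -⟩
        exact absurd (lt_of_lt_of_le hc c1.1) (lt_irrefl _)
      rw [if_neg c2, if_pos ⟨c1.2.1, g, List.mem_cons_self, c1.1, c1.2.2.1⟩]
    · rw [if_neg c1]
      by_cases c2 : p < σ⁻¹ g ∧ ∃ h ∈ t, σ⁻¹ h ≤ p ∧ h < q
      · obtain ⟨hc, h, hht, hh1, hh2⟩ := c2
        rw [if_pos ⟨hc, h, hht, hh1, hh2⟩,
          if_pos ⟨hc.trans hginv, h, List.mem_cons_of_mem g hht, hh1, hh2⟩]
      · rw [if_neg c2]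
        rw [if_neg]
        rintro ⟨hpL, h, hmem', hh1, hh2⟩
        rcases List.mem_cons.1 hmem' with rfl | hht
        · exact c1 ⟨hh1, hpL, hh2, hqL⟩
        · by_cases hp : p < σ⁻¹ g
          · exact c2 ⟨hp, h, hht, hh1, hh2⟩
          · exact c1 ⟨not_lt.1 hp, hpL, lt_trans (hgt h hht) hh2, hqL⟩

/-- every element of `B` is dominated by a greedy element. -/
lemma greedy_dominates {n : ℕ} (σ : Equiv.Perm (Fin (n + 1))) (B : Finset (Fin (n + 1))) :
    ∀ i ∈ B, ∃ g ∈ greedy σ B, g ≤ i ∧ σ⁻¹ g ≤ σ⁻¹ i := by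
  suffices h : ∀ (m : ℕ) (i : Fin (n + 1)), i ∈ B → i.val < m →
      ∃ g ∈ greedy σ B, g ≤ i ∧ σ⁻¹ g ≤ σ⁻¹ i by
    intro i hi
    exact h (i.val + 1) i hi (Nat.lt_succ_self _)
  intro m
  induction m with
  | zero => intro i _ h; exact absurd h (Nat.not_lt_zero _)
  | succ m IH =>
    intro i hi him
    by_cases hg : i ∈ greedy σ B
    · exact ⟨i, hg, le_refl _, le_refl _⟩
    · have : ∃ j ∈ B, j < i ∧ σ⁻¹ j ≤ σ⁻¹ i := by
        by_contra hc
        push_neg at hc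
        apply hg
        simp only [greedy, Finset.mem_filter]
        exact ⟨hi, fun j hj hji => hc j hj hji⟩
      obtain ⟨j, hjB, hji, hjinv⟩ := this
      obtain ⟨g, hg1, hg2, hg3⟩ := IH j hjB (by
        have : (j : ℕ) < (i : ℕ) := hji
        omega)
      exact ⟨g, hg1, hg2.trans hji.le, hg3.trans hjinv⟩

end BruhatAux

/-- for nonempty `B ⊆ 𝒟(σ)`, `σ^B` is the Bruhat supremum of
`{(i,n)·σ : i ∈ B}`: it is an upper bound, and below every upper bound. -/
theorem stmt_16 {n : ℕ} (σ : Equiv.Perm (Fin (n + 1)))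
    (B : Finset (Fin (n + 1))) (hB : B ⊆ permD σ) (hne : B.Nonempty) :
    (∀ i ∈ B, permBruhatLE (Equiv.swap i (Fin.last n) * σ) (sigmaB σ B)) ∧
    (∀ z : Equiv.Perm (Fin (n + 1)),
      (∀ i ∈ B, permBruhatLE (Equiv.swap i (Fin.last n) * σ) z) →
      permBruhatLE (sigmaB σ B) z) := by
  classical
  set L := Fin.last n with hL
  set l := (greedy σ B).sort (· ≤ ·) with hl
  have hsort : l.Pairwise (· < ·) := (Finset.sortedLT_sort _).pairwise
  have hmemg : ∀ g ∈ l, g ∈ greedy σ B := fun g hg => (Finset.mem_sort _).1 hg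
  have hgB : ∀ g ∈ greedy σ B, g ∈ B := fun g hg => Finset.filter_subset _ _ hg
  have hmem : ∀ g ∈ l, g < L ∧ σ⁻¹ g < σ⁻¹ L := by
    intro g hg
    have := hB (hgB g (hmemg g hg))
    simpa [permD] using this
  have hdec : l.Pairwise (fun a b => σ⁻¹ b < σ⁻¹ a) := by
    refine List.Pairwise.imp_of_mem ?_ hsort
    intro a b ha hb hab
    have hbg := hmemg b hb
    simp only [greedy, Finset.mem_filter] at hbg
    exact hbg.2 a (hgB a (hmemg a ha)) hab
  have hmaster : ∀ p q, dmat (sigmaB σ B) p q = dmat σ p q +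
      (if p < σ⁻¹ L ∧ ∃ g ∈ l, σ⁻¹ g ≤ p ∧ g < q then 1 else 0) :=
    master l σ hsort hmem hdec
  have hDcond : ∀ i ∈ B, i < L ∧ σ⁻¹ i < σ⁻¹ L := by
    intro i hi
    simpa [permD] using hB hi
  constructor
  · intro i hi
    obtain ⟨hiL, hiinv⟩ := hDcond i hi
    apply bruhat_of_dmat_le (permLen (sigmaB σ B)) _ _ (le_refl _)
    intro p q
    rw [dmat_swap_last σ i hiL hiinv p q, hmaster p q]
    by_cases hbx : σ⁻¹ i ≤ p ∧ p < σ⁻¹ L ∧ i < q ∧ q ≤ L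
    · rw [if_pos hbx]
      obtain ⟨h1, h2, h3, h4⟩ := hbx
      obtain ⟨g, hg, hgle, hginv⟩ := greedy_dominates σ B i hi
      rw [if_pos ⟨h2, g, (Finset.mem_sort _).2 hg, hginv.trans h1, lt_of_le_of_lt hgle h3⟩]
    · rw [if_neg hbx]
      omega
  · intro z hz
    have hzd : ∀ i ∈ B, ∀ p q, dmat (Equiv.swap i L * σ) p q ≤ dmat z p q :=
      fun i hi => dmat_le_of_bruhat _ _ (hz i hi)
    apply bruhat_of_dmat_le (permLen z) _ _ (le_refl _)
    intro p q
    rw [hmaster p q]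
    by_cases hbx : p < σ⁻¹ L ∧ ∃ g ∈ l, σ⁻¹ g ≤ p ∧ g < q
    · rw [if_pos hbx]
      obtain ⟨hpL, g, hgl, hg1, hg2⟩ := hbx
      have hgBmem : g ∈ B := hgB g (hmemg g hgl)
      obtain ⟨hgL, hginv⟩ := hDcond g hgBmem
      have := hzd g hgBmem p q
      rw [dmat_swap_last σ g hgL hginv p q,
        if_pos ⟨hg1, hpL, hg2, Fin.le_last q⟩] at this
      omega
    · rw [if_neg hbx]
      obtain ⟨i₀, hi₀⟩ := hne
      obtain ⟨hiL, hiinv⟩ := hDcond i₀ hi₀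
      have := hzd i₀ hi₀ p q
      rw [dmat_swap_last σ i₀ hiL hiinv p q] at this
      omega
end
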